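/- arXiv:2511.18418 — 9 statements merged into one kernel-verified Lean document; each statement's English description precedes it below -/
import Mathlib

section
/- Let S be a nonempty finite set and P : S × S → ℝ a row-stochastic matrix (P(s,s') ≥ 0 for all s,s' and Σ_{s'} P(s,s') = 1 for all s) such that every state can be reached from every other state in finitely many steps through transitions of positive probability. For each s ∈ S set R_s = Σ_{g ∈ G{s}} ∏_{x ∈ S∖{s}} P(x, g(x)), where G{s} denotes the set of {s}-graphs on S. Then Σ_{s∈S} R_s > 0, and the vector π defined by π_s = R_s / Σ_{s'∈S} R_{s'} is the unique stationary distribution of P: π_s ≥ 0 for all s, Σ_s π_s = 1, and Σ_s π_s P(s,s') = π_{s'} for every s' ∈ S. -/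
attribute [local instance] Classical.propDecidable

/-- The Freidlin–Wentzell weight of a state `s`: the sum over all `{s}`-graphs `g`
(functions on `S \ {s}`, normalized here by `g s = s`, with no fixed points off `s`
and all iterates eventually reaching `s`) of the product of the transition
probabilities `P x (g x)` along the edges of the graph. -/
noncomputable def graphWeight {S : Type*} [Fintype S] [DecidableEq S]
    (P : S → S → ℝ) (s : S) : ℝ :=
  ∑ g ∈ Finset.univ.filter
      (fun g : S → S => g s = s ∧ ∀ x, x ≠ s → (g x ≠ x ∧ ∃ n : ℕ, g^[n] x = s)),
    ∏ x ∈ Finset.univ.erase s, P x (g x)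

section Aux

open Finset

variable {S : Type*} [Fintype S] [DecidableEq S]

/-- The finset of `{s}`-graphs. -/
noncomputable def Gset (s : S) : Finset (S → S) :=
  Finset.univ.filter
      (fun g : S → S => g s = s ∧ ∀ x, x ≠ s → (g x ≠ x ∧ ∃ n : ℕ, g^[n] x = s))

lemma graphWeight_eq (P : S → S → ℝ) (s : S) :
    graphWeight P s = ∑ g ∈ Gset s, ∏ x ∈ Finset.univ.erase s, P x (g x) := rfl

lemma mem_Gset {s : S} {g : S → S} : g ∈ Gset s ↔
    g s = s ∧ ∀ x, x ≠ s → (g x ≠ x ∧ ∃ n : ℕ, g^[n] x = s) := by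
  simp [Gset]

/-- The finset of fixed-point-free functional graphs in which every point
eventually reaches `s'` in at least one step. -/
noncomputable def Cset (s' : S) : Finset (S → S) :=
  Finset.univ.filter
      (fun h : S → S => (∀ x, h x ≠ x) ∧ ∀ x, ∃ n : ℕ, h^[n + 1] x = s')

lemma mem_Cset {s' : S} {h : S → S} : h ∈ Cset s' ↔
    (∀ x, h x ≠ x) ∧ ∀ x, ∃ n : ℕ, h^[n + 1] x = s' := by
  rw [Cset, Finset.mem_filter]; simp only [Finset.mem_univ, true_and]

lemma iter_agree {f g : S → S} {a : S} (hfg : ∀ x, x ≠ a → f x = g x) :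
    ∀ n x, f^[n] x = a → ∃ m, g^[m] x = a := by
  intro n
  induction n with
  | zero => exact fun x hx => ⟨0, hx⟩
  | succ n ih =>
    intro x hx
    by_cases hxa : x = a
    · exact ⟨0, hxa⟩
    · rw [Function.iterate_succ_apply] at hx
      obtain ⟨m, hm⟩ := ih (f x) hx
      exact ⟨m + 1, by rw [Function.iterate_succ_apply, ← hfg x hxa]; exact hm⟩

lemma iter_per {f : S → S} {x : S} {p : ℕ} (hp : f^[p] x = x) :
    ∀ k r, f^[p * k + r] x = f^[r] x := by
  intro k
  induction k with
  | zero => simp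
  | succ k ih =>
    intro r
    have h1 : p * (k + 1) + r = (p * k + r) + p := by ring
    rw [h1, Function.iterate_add_apply, hp, ih]

lemma pred_unique {h : S → S} {s' : S} (hex : ∃ n, h^[n + 1] s' = s')
    {m : ℕ} (hm : h^[m + 1] s' = s') : h^[m] s' = h^[Nat.find hex] s' := by
  set k := Nat.find hex with hk
  have hks : h^[k + 1] s' = s' := Nat.find_spec hex
  have hmod : (m + 1) % (k + 1) = 0 := by
    by_contra hne
    have h3 := iter_per hks ((m + 1) / (k + 1)) ((m + 1) % (k + 1))
    rw [Nat.div_add_mod] at h3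
    have h2 : h^[(m + 1) % (k + 1)] s' = s' := h3.symm.trans hm
    obtain ⟨rr', hrr'⟩ : ∃ rr', (m + 1) % (k + 1) = rr' + 1 :=
      ⟨(m + 1) % (k + 1) - 1, by omega⟩
    have hlt : rr' < k := by
      have := Nat.mod_lt (m + 1) (show 0 < k + 1 by omega)
      omega
    exact Nat.find_min hex hlt (by rw [← hrr']; exact h2)
  obtain ⟨q, hq⟩ := Nat.dvd_of_mod_eq_zero hmod
  cases q with
  | zero => simp at hq
  | succ q =>
    have hmq : m = (k + 1) * q + k := by
      have : m + 1 = (k + 1) * q + k + 1 := by rw [hq, Nat.mul_succ]; ring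
      omega
    rw [hmq]
    exact iter_per hks q k

/-- The predecessor of `s'` on the unique cycle of `h` through `s'`. -/
noncomputable def sigmaOf (h : S → S) (s' : S) : S :=
  if hex : ∃ n, h^[n + 1] s' = s' then h^[Nat.find hex] s' else s'

lemma sigmaOf_spec {h : S → S} {s' : S} (hex : ∃ n, h^[n + 1] s' = s') :
    h (sigmaOf h s' ) = s' := by
  rw [sigmaOf, dif_pos hex]
  have h1 := Nat.find_spec hex
  rwa [Function.iterate_succ_apply'] at h1

lemma sigmaOf_eq {h : S → S} {s' : S} (hex : ∃ n, h^[n + 1] s' = s') {m : ℕ}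
    (hm : h^[m + 1] s' = s') : h^[m] s' = sigmaOf h s' := by
  rw [sigmaOf, dif_pos hex]
  exact pred_unique hex hm

lemma sigmaOf_ne {h : S → S} {s' : S} (hex : ∃ n, h^[n + 1] s' = s')
    (hfix : h s' ≠ s') : sigmaOf h s' ≠ s' := by
  intro heq
  have := sigmaOf_spec hex
  rw [heq] at this
  exact hfix this

lemma reach_sigmaOf {h : S → S} {s' z : S} (hex : ∃ n, h^[n + 1] s' = s')
    (hz : ∃ n, h^[n + 1] z = s') : ∃ m, h^[m] z = sigmaOf h s' := by
  obtain ⟨n, hn⟩ := hz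
  refine ⟨Nat.find hex + (n + 1), ?_⟩
  rw [Function.iterate_add_apply, hn, sigmaOf, dif_pos hex]

lemma exists_path {r : S → S → Prop} {x y : S} (h : Relation.TransGen r x y) :
    ∃ n : ℕ, ∃ f : ℕ → S, f 0 = x ∧ f n = y ∧ ∀ i < n, r (f i) (f (i + 1)) := by
  induction h with
  | @single b hxb =>
    refine ⟨1, fun i => if i = 0 then x else b, by simp, by simp, ?_⟩
    intro i hi
    interval_cases i
    simpa using hxb
  | @tail b c hab hbc ih =>
    obtain ⟨n, f, h0, hn, hstep⟩ := ih
    refine ⟨n + 1, fun i => if i ≤ n then f i else c, by simp [h0], by simp, ?_⟩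
    intro i hi
    by_cases hin : i < n
    · simp only [show i ≤ n by omega, if_pos, show i + 1 ≤ n by omega]
      simpa [show i ≤ n by omega, show i + 1 ≤ n by omega] using hstep i hin
    · have hieq : i = n := by omega
      subst hieq
      simpa [show ¬ (i + 1 ≤ i) by omega, hn] using hbc

lemma exists_pos_graph (P : S → S → ℝ)
    (hirr : ∀ s s', s ≠ s' → Relation.TransGen (fun x y => 0 < P x y) s s')
    (s₀ : S) :
    ∃ g : S → S, g ∈ Gset s₀ ∧ ∀ x, x ≠ s₀ → 0 < P x (g x) := by
  set r : S → S → Prop := fun x y => 0 < P x y with hr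
  set Q : S → ℕ → Prop :=
    fun x n => ∃ f : ℕ → S, f 0 = x ∧ f n = s₀ ∧ ∀ i < n, r (f i) (f (i + 1)) with hQ
  have hQex : ∀ x, x ≠ s₀ → ∃ n, Q x n := by
    intro x hx
    obtain ⟨n, f, h0, hn, hstep⟩ := exists_path (hirr x s₀ hx)
    exact ⟨n, f, h0, hn, hstep⟩
  set d : S → ℕ := fun x => if hx : x ≠ s₀ then Nat.find (hQex x hx) else 0 with hd
  have step : ∀ x, x ≠ s₀ → ∃ y, r x y ∧ y ≠ x ∧ (y = s₀ ∨ (y ≠ s₀ ∧ d y < d x)) := by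
    intro x hx
    have hdx : d x = Nat.find (hQex x hx) := by rw [hd]; simp [hx]
    obtain ⟨f, h0, hn, hstep⟩ := Nat.find_spec (hQex x hx)
    set n := Nat.find (hQex x hx) with hnn
    have hn1 : 0 < n := by
      rcases Nat.eq_zero_or_pos n with h | h
      · exfalso; apply hx; rw [← h0, ← hn, h]
      · exact h
    have htail : ∀ i, i < n - 1 → r (f (i + 1)) (f (i + 1 + 1)) :=
      fun i hi => hstep (i + 1) (by omega)
    have htailend : f ((n - 1) + 1) = s₀ := by
      rw [show (n - 1) + 1 = n by omega]; exact hn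
    refine ⟨f 1, ?_, ?_, ?_⟩
    · have := hstep 0 hn1; rwa [h0] at this
    · intro heq
      have hQ' : Q x (n - 1) :=
        ⟨fun i => f (i + 1), heq, htailend, htail⟩
      exact Nat.find_min (hQex x hx) (by omega) hQ'
    · by_cases hy : f 1 = s₀
      · exact Or.inl hy
      · refine Or.inr ⟨hy, ?_⟩
        have hQ' : Q (f 1) (n - 1) := ⟨fun i => f (i + 1), rfl, htailend, htail⟩
        have hle : Nat.find (hQex (f 1) hy) ≤ n - 1 := Nat.find_le hQ'
        have hdy : d (f 1) = Nat.find (hQex (f 1) hy) := by rw [hd]; simp [hy]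
        rw [hdx, hdy]
        omega
  choose! y hy1 hy2 hy3 using step
  set g : S → S := fun x => if x = s₀ then s₀ else y x with hg
  have hgx : ∀ x, x ≠ s₀ → g x = y x := fun x hx => if_neg hx
  have hreach : ∀ N x, x ≠ s₀ → d x ≤ N → ∃ n, g^[n] x = s₀ := by
    intro N
    induction N with
    | zero =>
      intro x hx hdx
      rcases hy3 x hx with h | h
      · exact ⟨1, by rw [Function.iterate_one, hgx x hx, h]⟩
      · omega
    | succ N ih =>
      intro x hx hdx
      rcases hy3 x hx with h | ⟨hys, hlt⟩
      · exact ⟨1, by rw [Function.iterate_one, hgx x hx, h]⟩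
      · obtain ⟨n, hn⟩ := ih (y x) hys (by omega)
        refine ⟨n + 1, ?_⟩
        rw [Function.iterate_succ_apply, hgx x hx]
        exact hn
  refine ⟨g, mem_Gset.2 ⟨if_pos rfl, fun x hx => ⟨?_, hreach (d x) x hx le_rfl⟩⟩,
    fun x hx => ?_⟩
  · rw [hgx x hx]
    exact hy2 x hx
  · rw [hgx x hx]
    exact hy1 x hx

lemma sum_Cset_eq_lhs (P : S → S → ℝ) (s' : S) :
    ∑ s ∈ Finset.univ.erase s', graphWeight P s * P s s'
      = ∑ h ∈ Cset s', ∏ x, P x (h x) := by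
  have hrw : ∀ s ∈ Finset.univ.erase s', graphWeight P s * P s s'
      = ∑ g ∈ Gset s, (∏ x ∈ Finset.univ.erase s, P x (g x)) * P s s' := by
    intro s _
    rw [graphWeight_eq, Finset.sum_mul]
  rw [Finset.sum_congr rfl hrw, Finset.sum_sigma']
  refine Finset.sum_bij' (fun p _ => Function.update p.2 p.1 s')
    (fun h _ => ⟨sigmaOf h s', Function.update h (sigmaOf h s') (sigmaOf h s')⟩)
    ?_ ?_ ?_ ?_ ?_
  · -- forward membership
    rintro ⟨s, g⟩ hp
    dsimp only
    rw [Finset.mem_sigma] at hp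
    obtain ⟨hs, hgmem⟩ := hp
    have hss' : s ≠ s' := (Finset.mem_erase.1 hs).1
    obtain ⟨hgs, hcond⟩ := mem_Gset.1 hgmem
    set h : S → S := Function.update g s s' with hh
    have hagree : ∀ x, x ≠ s → g x = h x := by
      intro x hx
      rw [hh, Function.update_of_ne hx]
    have hreachS : ∀ x, ∃ m, h^[m] x = s := by
      intro x
      by_cases hx : x = s
      · exact ⟨0, hx⟩
      · exact iter_agree hagree _ x (hcond x hx).2.choose_spec
    refine mem_Cset.2 ⟨?_, ?_⟩
    · intro x
      by_cases hx : x = s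
      · subst hx
        rw [hh, Function.update_self]
        exact fun he => hss' he.symm
      · rw [hh, Function.update_of_ne hx]
        exact (hcond x hx).1
    · intro x
      obtain ⟨m, hm⟩ := hreachS x
      refine ⟨m, ?_⟩
      rw [Function.iterate_succ_apply', hm, hh, Function.update_self]
  · -- backward membership
    intro h hmem
    obtain ⟨hfix, hreach⟩ := mem_Cset.1 hmem
    have hex : ∃ n, h^[n + 1] s' = s' := hreach s'
    set σ : S := sigmaOf h s' with hσ
    have hσne : σ ≠ s' := sigmaOf_ne hex (hfix s')
    have hhσ : h σ = s' := sigmaOf_spec hex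
    rw [Finset.mem_sigma]
    dsimp only
    refine ⟨Finset.mem_erase.2 ⟨hσne, Finset.mem_univ _⟩, mem_Gset.2 ⟨Function.update_self _ _ _, ?_⟩⟩
    intro x hx
    constructor
    · rw [Function.update_of_ne hx]
      exact hfix x
    · have hxr : ∃ m, h^[m] x = σ := reach_sigmaOf hex (hreach x)
      obtain ⟨m, hm⟩ := hxr
      exact iter_agree (fun z hz => (Function.update_of_ne hz σ h).symm) m x hm
  · -- left inverse
    rintro ⟨s, g⟩ hp
    dsimp only
    rw [Finset.mem_sigma] at hp
    obtain ⟨hs, hgmem⟩ := hp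
    have hss' : s ≠ s' := (Finset.mem_erase.1 hs).1
    obtain ⟨hgs, hcond⟩ := mem_Gset.1 hgmem
    dsimp only at hgs hcond hss'
    set h : S → S := Function.update g s s' with hh
    have hagree : ∀ x, x ≠ s → g x = h x := by
      intro x hx
      rw [hh, Function.update_of_ne hx]
    have hex : ∃ n, h^[n + 1] s' = s' := by
      obtain ⟨m, hm⟩ := iter_agree hagree _ s'
        (hcond s' (fun he => hss' he.symm)).2.choose_spec
      exact ⟨m, by rw [Function.iterate_succ_apply', hm, hh, Function.update_self]⟩
    have hσs : sigmaOf h s' = s := by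
      obtain ⟨m, hm⟩ := iter_agree hagree _ s'
        (hcond s' (fun he => hss' he.symm)).2.choose_spec
      have hm1 : h^[m + 1] s' = s' := by
        rw [Function.iterate_succ_apply', hm, hh, Function.update_self]
      rw [← sigmaOf_eq hex hm1, hm]
    have : Function.update h s s = g := by
      have h2 : Function.update g s s = Function.update g s (g s) := by rw [hgs]
      rw [hh, Function.update_idem, h2, Function.update_eq_self]
    refine Sigma.ext ?_ ?_
    · exact hσs
    · simp only [hσs]
      exact heq_of_eq this
  · -- right inverse
    intro h hmem
    dsimp only
    obtain ⟨hfix, hreach⟩ := mem_Cset.1 hmem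
    have hex : ∃ n, h^[n + 1] s' = s' := hreach s'
    set σ : S := sigmaOf h s' with hσ
    have hhσ : h σ = s' := sigmaOf_spec hex
    rw [Function.update_idem, ← hhσ, Function.update_eq_self]
  · -- weights
    rintro ⟨s, g⟩ hp
    dsimp only
    rw [Finset.mem_sigma] at hp
    obtain ⟨hs, hgmem⟩ := hp
    set h : S → S := Function.update g s s' with hh
    have h1 : ∏ x, P x (h x)
        = P s (h s) * ∏ x ∈ Finset.univ.erase s, P x (h x) :=
      (Finset.mul_prod_erase Finset.univ _ (Finset.mem_univ s)).symm
    have h2 : ∀ x ∈ Finset.univ.erase s, P x (h x) = P x (g x) := by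
      intro x hx
      rw [hh, Function.update_of_ne (Finset.mem_erase.1 hx).1]
    rw [h1, Finset.prod_congr rfl h2, hh, Function.update_self, mul_comm]

lemma sum_Cset_eq_rhs (P : S → S → ℝ) (s' : S) :
    ∑ s'' ∈ Finset.univ.erase s', graphWeight P s' * P s' s''
      = ∑ h ∈ Cset s', ∏ x, P x (h x) := by
  have hrw : ∀ s'' ∈ Finset.univ.erase s', graphWeight P s' * P s' s''
      = ∑ g ∈ Gset s', (∏ x ∈ Finset.univ.erase s', P x (g x)) * P s' s'' := by
    intro s'' _
    rw [graphWeight_eq, Finset.sum_mul]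
  rw [Finset.sum_congr rfl hrw, Finset.sum_sigma']
  refine Finset.sum_bij' (fun p _ => Function.update p.2 s' p.1)
    (fun h _ => ⟨h s', Function.update h s' s'⟩) ?_ ?_ ?_ ?_ ?_
  · -- forward membership
    rintro ⟨s'', g⟩ hp
    dsimp only
    rw [Finset.mem_sigma] at hp
    obtain ⟨hs, hgmem⟩ := hp
    have hss' : s'' ≠ s' := (Finset.mem_erase.1 hs).1
    obtain ⟨hgs, hcond⟩ := mem_Gset.1 hgmem
    set h : S → S := Function.update g s' s'' with hh
    have hagree : ∀ x, x ≠ s' → g x = h x := by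
      intro x hx
      rw [hh, Function.update_of_ne hx]
    have hreachS : ∀ x, ∃ m, h^[m] x = s' := by
      intro x
      by_cases hx : x = s'
      · exact ⟨0, hx⟩
      · exact iter_agree hagree _ x (hcond x hx).2.choose_spec
    refine mem_Cset.2 ⟨?_, ?_⟩
    · intro x
      by_cases hx : x = s'
      · subst hx
        rw [hh, Function.update_self]
        exact hss'
      · rw [hh, Function.update_of_ne hx]
        exact (hcond x hx).1
    · intro x
      obtain ⟨m, hm⟩ := hreachS (h x)
      exact ⟨m, by rw [Function.iterate_succ_apply]; exact hm⟩
  · -- backward membership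
    intro h hmem
    obtain ⟨hfix, hreach⟩ := mem_Cset.1 hmem
    rw [Finset.mem_sigma]
    dsimp only
    refine ⟨Finset.mem_erase.2 ⟨hfix s', Finset.mem_univ _⟩,
      mem_Gset.2 ⟨Function.update_self _ _ _, ?_⟩⟩
    intro x hx
    constructor
    · rw [Function.update_of_ne hx]
      exact hfix x
    · obtain ⟨n, hn⟩ := hreach x
      exact iter_agree (fun z hz => (Function.update_of_ne hz s' h).symm) (n + 1) x hn
  · -- left inverse
    rintro ⟨s'', g⟩ hp
    dsimp only
    rw [Finset.mem_sigma] at hp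
    obtain ⟨hs, hgmem⟩ := hp
    obtain ⟨hgs, -⟩ := mem_Gset.1 hgmem
    dsimp only at hgs
    refine Sigma.ext (Function.update_self _ _ _) (heq_of_eq ?_)
    simp only [Function.update_self]
    have h2 : Function.update g s' s' = Function.update g s' (g s') := by rw [hgs]
    rw [Function.update_idem, h2, Function.update_eq_self]
  · -- right inverse
    intro h hmem
    dsimp only
    rw [Function.update_idem, Function.update_eq_self]
  · -- weights
    rintro ⟨s'', g⟩ hp
    dsimp only
    rw [Finset.mem_sigma] at hp
    obtain ⟨hs, hgmem⟩ := hp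
    set h : S → S := Function.update g s' s'' with hh
    have h1 : ∏ x, P x (h x)
        = P s' (h s') * ∏ x ∈ Finset.univ.erase s', P x (h x) :=
      (Finset.mul_prod_erase Finset.univ _ (Finset.mem_univ s')).symm
    have h2 : ∀ x ∈ Finset.univ.erase s', P x (h x) = P x (g x) := by
      intro x hx
      rw [hh, Function.update_of_ne (Finset.mem_erase.1 hx).1]
    rw [h1, Finset.prod_congr rfl h2, hh, Function.update_self, mul_comm]

lemma graphWeight_stationary (P : S → S → ℝ) (hrow : ∀ s, ∑ s', P s s' = 1)
    (s' : S) : ∑ s, graphWeight P s * P s s' = graphWeight P s' := by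
  have h1 : ∑ s, graphWeight P s * P s s'
      = graphWeight P s' * P s' s'
        + ∑ s ∈ Finset.univ.erase s', graphWeight P s * P s s' :=
    (Finset.add_sum_erase Finset.univ _ (Finset.mem_univ s')).symm
  have h2 : graphWeight P s' = graphWeight P s' * P s' s'
      + ∑ s'' ∈ Finset.univ.erase s', graphWeight P s' * P s' s'' := by
    rw [← Finset.mul_sum, ← mul_add, Finset.add_sum_erase Finset.univ (P s') (Finset.mem_univ s'),
      hrow s', mul_one]
  rw [sum_Cset_eq_rhs] at h2
  rw [h1, sum_Cset_eq_lhs]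
  linarith

lemma graphWeight_nonneg (P : S → S → ℝ) (hnn : ∀ s s', 0 ≤ P s s') (s : S) :
    0 ≤ graphWeight P s :=
  Finset.sum_nonneg fun g _ => Finset.prod_nonneg fun x _ => hnn x (g x)

lemma graphWeight_pos (P : S → S → ℝ) (hnn : ∀ s s', 0 ≤ P s s')
    (hirr : ∀ s s', s ≠ s' → Relation.TransGen (fun x y => 0 < P x y) s s')
    (s₀ : S) : 0 < graphWeight P s₀ := by
  obtain ⟨g, hg, hpos⟩ := exists_pos_graph P hirr s₀
  have hterm : 0 < ∏ x ∈ Finset.univ.erase s₀, P x (g x) :=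
    Finset.prod_pos fun x hx => hpos x (Finset.mem_erase.1 hx).1
  have hle : ∏ x ∈ Finset.univ.erase s₀, P x (g x) ≤ graphWeight P s₀ := by
    rw [graphWeight_eq]
    exact Finset.single_le_sum
      (fun g' _ => Finset.prod_nonneg fun x _ => hnn x (g' x)) hg
  linarith

lemma stationary_vanish (P : S → S → ℝ) (hnn : ∀ s s', 0 ≤ P s s')
    (hirr : ∀ s s', s ≠ s' → Relation.TransGen (fun x y => 0 < P x y) s s')
    (q : S → ℝ) (hq0 : ∀ s, 0 ≤ q s)
    (hstat : ∀ s', ∑ s, q s * P s s' = q s') {s₀ : S} (h0 : q s₀ = 0) :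
    ∀ s, q s = 0 := by
  have key : ∀ x z, 0 < P x z → q z = 0 → q x = 0 := by
    intro x z hP hz
    have hsum : ∑ s, q s * P s z = 0 := by rw [hstat z, hz]
    have hterm : q x * P x z = 0 :=
      (Finset.sum_eq_zero_iff_of_nonneg
        (fun s _ => mul_nonneg (hq0 s) (hnn s z))).1 hsum x (Finset.mem_univ x)
    rcases mul_eq_zero.1 hterm with h | h
    · exact h
    · exact absurd h hP.ne'
  have main : ∀ a, Relation.TransGen (fun x y => 0 < P x y) a s₀ → q a = 0 := by
    intro a h
    induction h using Relation.TransGen.head_induction_on with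
    | single h => exact key _ _ h h0
    | head h _ ihq => exact key _ _ h ihq
  intro s
  by_cases hs : s = s₀
  · rw [hs]; exact h0
  · exact main s (hirr s s₀ hs)

end Aux

/-- Lemma 6.3.1 of Freidlin–Wentzell: for an irreducible row-stochastic matrix `P`
on a nonempty finite set, `π s = R s / ∑ R` (with `R` the `{s}`-graph weights) is
the unique stationary distribution. -/
theorem stmt0 {S : Type*} [Fintype S] [DecidableEq S] [Nonempty S]
    (P : S → S → ℝ)
    (hnn : ∀ s s', 0 ≤ P s s')
    (hrow : ∀ s, ∑ s', P s s' = 1)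
    (hirr : ∀ s s', s ≠ s' → Relation.TransGen (fun x y => 0 < P x y) s s') :
    0 < (∑ s, graphWeight P s) ∧
    (∀ s, 0 ≤ graphWeight P s / ∑ s', graphWeight P s') ∧
    (∑ s, graphWeight P s / ∑ s', graphWeight P s') = 1 ∧
    (∀ s', ∑ s, (graphWeight P s / ∑ s'', graphWeight P s'') * P s s'
        = graphWeight P s' / ∑ s'', graphWeight P s'') ∧
    (∀ q : S → ℝ, (∀ s, 0 ≤ q s) → (∑ s, q s = 1) →
      (∀ s', ∑ s, q s * P s s' = q s') →
      ∀ s, q s = graphWeight P s / ∑ s', graphWeight P s') := by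
  set T : ℝ := ∑ s, graphWeight P s with hT
  have hTpos : 0 < T :=
    Finset.sum_pos (fun s _ => graphWeight_pos P hnn hirr s) Finset.univ_nonempty
  have hπnn : ∀ s, 0 ≤ graphWeight P s / T :=
    fun s => div_nonneg (graphWeight_nonneg P hnn s) hTpos.le
  have hπsum : (∑ s, graphWeight P s / T) = 1 := by
    rw [← Finset.sum_div, ← hT, div_self hTpos.ne']
  have hπstat : ∀ s', ∑ s, (graphWeight P s / T) * P s s' = graphWeight P s' / T := by
    intro s'
    have : ∑ s, (graphWeight P s / T) * P s s'
        = (∑ s, graphWeight P s * P s s') / T := by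
      rw [Finset.sum_div]
      exact Finset.sum_congr rfl fun s _ => div_mul_eq_mul_div _ _ _
    rw [this, graphWeight_stationary P hrow s']
  refine ⟨hTpos, hπnn, hπsum, hπstat, ?_⟩
  intro q hq0 hqsum hqstat
  set π : S → ℝ := fun s => graphWeight P s / T with hπ
  have hπpos : ∀ s, 0 < π s := fun s => div_pos (graphWeight_pos P hnn hirr s) hTpos
  obtain ⟨s₀, _, hmin⟩ :=
    Finset.exists_min_image Finset.univ (fun s => q s / π s) Finset.univ_nonempty
  set c : ℝ := q s₀ / π s₀ with hc
  have hle : ∀ s, c * π s ≤ q s := by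
    intro s
    have h1 : c ≤ q s / π s := hmin s (Finset.mem_univ s)
    calc c * π s ≤ (q s / π s) * π s := by
          exact mul_le_mul_of_nonneg_right h1 (hπpos s).le
      _ = q s := div_mul_cancel₀ _ (hπpos s).ne'
  set v : S → ℝ := fun s => q s - c * π s with hv
  have hv0 : ∀ s, 0 ≤ v s := fun s => sub_nonneg.2 (hle s)
  have hvstat : ∀ s', ∑ s, v s * P s s' = v s' := by
    intro s'
    have : ∀ s, v s * P s s' = q s * P s s' - c * (π s * P s s') := by
      intro s; simp only [hv]; ring
    rw [Finset.sum_congr rfl fun s _ => this s, Finset.sum_sub_distrib,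
      ← Finset.mul_sum, hqstat s', hπstat s']
  have hvs₀ : v s₀ = 0 := by
    simp only [hv, hc]
    rw [div_mul_cancel₀ _ (hπpos s₀).ne']
    ring
  have hvzero : ∀ s, v s = 0 := stationary_vanish P hnn hirr v hv0 hvstat hvs₀
  have hqc : ∀ s, q s = c * π s := by
    intro s
    have := hvzero s
    simp only [hv] at this
    linarith
  have hc1 : c = 1 := by
    have h2 : ∑ s, π s = 1 := hπsum
    have h1 : (1 : ℝ) = c * 1 := by
      calc (1 : ℝ) = ∑ s, q s := hqsum.symm
        _ = ∑ s, c * π s := Finset.sum_congr rfl fun s _ => hqc s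
        _ = c * ∑ s, π s := (Finset.mul_sum _ _ _).symm
        _ = c * 1 := by rw [h2]
    linarith
  intro s
  rw [hqc s, hc1, one_mul]
end

section
/- Let S be a nonempty finite set and S_r ⊆ S a nonempty subset. For each s ∈ S let G_s be a nonempty finite set, and for each g ∈ G_s let γ_{s,g} ∈ (0,1) be a constant and r_{s,g} : (0,∞) → [0,∞) a function. Define R_s(ε) = Σ_{g∈G_s} γ_{s,g}·exp(−r_{s,g}(ε)), π_s(ε) = R_s(ε) / Σ_{s'∈S} R_{s'}(ε), and r*_s(ε) = min_{g∈G_s} r_{s,g}(ε). If for every s ∈ S_r and every s' ∈ S ∖ S_r one has r*_{s'}(ε) − r*_s(ε) → +∞ as ε → 0+, then Σ_{s∈S_r} π_s(ε) → 1 as ε → 0+. -/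
open Filter

/-- Stochastic-stability selection: if for every `s ∈ Sr` and `s' ∉ Sr` the difference
of minimum resistances `r*_{s'}(ε) − r*_s(ε)` tends to `+∞` as `ε → 0⁺`, then the
stationary mass `∑_{s ∈ Sr} π_s(ε)` tends to `1`, where
`π_s(ε) = R_s(ε)/∑_{s'} R_{s'}(ε)` and `R_s(ε) = ∑_{g ∈ G_s} γ_{s,g}·exp(−r_{s,g}(ε))`. -/
theorem stmt2 {S : Type*} [Fintype S] [DecidableEq S]
    (Sr : Finset S) (hSr : Sr.Nonempty)
    (G : S → Type*) [∀ s, Fintype (G s)] [∀ s, Nonempty (G s)]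
    (γ : (s : S) → G s → ℝ) (hγ : ∀ s g, 0 < γ s g ∧ γ s g < 1)
    (r : (s : S) → G s → ℝ → ℝ) (hr : ∀ s g ε, 0 < ε → 0 ≤ r s g ε)
    (hdiv : ∀ s ∈ Sr, ∀ s' ∉ Sr,
      Tendsto
        (fun ε : ℝ =>
          (Finset.univ.inf' Finset.univ_nonempty fun g : G s' => r s' g ε)
            - (Finset.univ.inf' Finset.univ_nonempty fun g : G s => r s g ε))
        (nhdsWithin 0 (Set.Ioi 0)) atTop) :
    Tendsto
      (fun ε : ℝ => ∑ s ∈ Sr,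
        (∑ g : G s, γ s g * Real.exp (-(r s g ε))) /
          (∑ s' : S, ∑ g : G s', γ s' g * Real.exp (-(r s' g ε))))
      (nhdsWithin 0 (Set.Ioi 0)) (nhds 1) := by
  obtain ⟨s0, hs0⟩ := hSr
  haveI : Nonempty S := ⟨s0⟩
  set f : ℝ → S → ℝ := fun ε s => ∑ g : G s, γ s g * Real.exp (-(r s g ε)) with hf
  have hfpos : ∀ ε (s : S), 0 < f ε s := fun ε s =>
    Finset.sum_pos (fun g _ => mul_pos (hγ s g).1 (Real.exp_pos _)) Finset.univ_nonempty
  set T : ℝ → ℝ := fun ε => ∑ s : S, f ε s with hT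
  have hTpos : ∀ ε, 0 < T ε := fun ε =>
    Finset.sum_pos (fun s _ => hfpos ε s) Finset.univ_nonempty
  set rstar : S → ℝ → ℝ := fun s ε => Finset.univ.inf' Finset.univ_nonempty fun g : G s => r s g ε
    with hrstar
  -- upper bound for f
  have hupper : ∀ ε (s : S), f ε s ≤ (∑ g : G s, γ s g) * Real.exp (-(rstar s ε)) := by
    intro ε s
    rw [Finset.sum_mul]
    apply Finset.sum_le_sum
    intro g _
    apply mul_le_mul_of_nonneg_left _ (hγ s g).1.le
    apply Real.exp_le_exp.2
    simp only [neg_le_neg_iff]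
    exact Finset.inf'_le _ (Finset.mem_univ g)
  -- lower bound for f
  have hlower : ∀ ε (s : S),
      (Finset.univ.inf' Finset.univ_nonempty (γ s)) * Real.exp (-(rstar s ε)) ≤ f ε s := by
    intro ε s
    obtain ⟨g0, -, hg0⟩ := Finset.exists_mem_eq_inf' (Finset.univ_nonempty) fun g : G s => r s g ε
    calc (Finset.univ.inf' Finset.univ_nonempty (γ s)) * Real.exp (-(rstar s ε))
        ≤ γ s g0 * Real.exp (-(r s g0 ε)) := by
          rw [hrstar]; simp only; rw [hg0]
          exact mul_le_mul_of_nonneg_right (Finset.inf'_le _ (Finset.mem_univ g0))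
            (Real.exp_pos _).le
      _ ≤ f ε s := Finset.single_le_sum (f := fun g : G s => γ s g * Real.exp (-(r s g ε)))
          (fun g _ => (mul_pos (hγ s g).1 (Real.exp_pos _)).le) (Finset.mem_univ g0)
  -- each out-of-Sr ratio tends to 0
  have hratio : ∀ s' ∉ Sr,
      Tendsto (fun ε => f ε s' / f ε s0) (nhdsWithin 0 (Set.Ioi 0)) (nhds 0) := by
    intro s' hs'
    have hγmin : 0 < Finset.univ.inf' Finset.univ_nonempty (γ s0) := by
      obtain ⟨g0, -, hg0⟩ := Finset.exists_mem_eq_inf' (Finset.univ_nonempty) (γ s0)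
      rw [hg0]; exact (hγ s0 g0).1
    set C : ℝ := (∑ g : G s', γ s' g) / (Finset.univ.inf' Finset.univ_nonempty (γ s0)) with hC
    have hbound : ∀ ε, f ε s' / f ε s0 ≤ C * Real.exp (-(rstar s' ε - rstar s0 ε)) := by
      intro ε
      have h1 : f ε s' / f ε s0
          ≤ ((∑ g : G s', γ s' g) * Real.exp (-(rstar s' ε))) /
            ((Finset.univ.inf' Finset.univ_nonempty (γ s0)) * Real.exp (-(rstar s0 ε))) :=
        div_le_div₀ (mul_nonneg (Finset.sum_nonneg fun g _ => (hγ s' g).1.le)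
            (Real.exp_pos _).le) (hupper ε s')
          (mul_pos hγmin (Real.exp_pos _)) (hlower ε s0)
      refine h1.trans_eq ?_
      have e : Real.exp (-(rstar s' ε - rstar s0 ε))
          = Real.exp (-(rstar s' ε)) / Real.exp (-(rstar s0 ε)) := by
        rw [← Real.exp_sub]; ring_nf
      rw [hC, e]
      field_simp
    have hlim : Tendsto (fun ε => C * Real.exp (-(rstar s' ε - rstar s0 ε)))
        (nhdsWithin 0 (Set.Ioi 0)) (nhds 0) := by
      have := (Real.tendsto_exp_atBot).comp (tendsto_neg_atBot_iff.2 (hdiv s0 hs0 s' hs'))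
      have := this.const_mul C
      simpa using this
    exact squeeze_zero (fun ε => div_nonneg (hfpos ε s').le (hfpos ε s0).le) hbound hlim
  -- sum of out ratios tends to 0
  have hsum0 : Tendsto (fun ε => ∑ s' ∈ Srᶜ, f ε s' / f ε s0)
      (nhdsWithin 0 (Set.Ioi 0)) (nhds 0) := by
    have := tendsto_finset_sum (Srᶜ) (fun s' hs' => hratio s' (Finset.mem_compl.1 hs'))
    simpa using this
  -- squeeze
  have hupper1 : ∀ ε, (∑ s ∈ Sr, f ε s / T ε) ≤ 1 := by
    intro ε
    rw [← Finset.sum_div, div_le_one (hTpos ε)]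
    exact Finset.sum_le_sum_of_subset_of_nonneg (Finset.subset_univ Sr)
      (fun s _ _ => (hfpos ε s).le)
  have hlower1 : ∀ ε, 1 - (∑ s' ∈ Srᶜ, f ε s' / f ε s0) ≤ ∑ s ∈ Sr, f ε s / T ε := by
    intro ε
    rw [← Finset.sum_div, ← Finset.sum_div, sub_le_iff_le_add]
    have hsplit : T ε = (∑ s ∈ Sr, f ε s) + ∑ s' ∈ Srᶜ, f ε s' := by
      rw [hT]; exact (Finset.sum_add_sum_compl Sr _).symm
    have h1 : (∑ s' ∈ Srᶜ, f ε s') / T ε ≤ (∑ s' ∈ Srᶜ, f ε s') / f ε s0 := by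
      apply div_le_div_of_nonneg_left (Finset.sum_nonneg fun s _ => (hfpos ε s).le)
        (hfpos ε s0)
      rw [hT]
      exact Finset.single_le_sum (fun s _ => (hfpos ε s).le) (Finset.mem_univ s0)
    calc (1 : ℝ) = (∑ s ∈ Sr, f ε s) / T ε + (∑ s' ∈ Srᶜ, f ε s') / T ε := by
          rw [← add_div, ← hsplit, div_self (hTpos ε).ne']
      _ ≤ (∑ s ∈ Sr, f ε s) / T ε + (∑ s' ∈ Srᶜ, f ε s') / f ε s0 := by linarith [h1]
  have hl : Tendsto (fun ε => 1 - (∑ s' ∈ Srᶜ, f ε s' / f ε s0))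
      (nhdsWithin 0 (Set.Ioi 0)) (nhds 1) := by
    have := (tendsto_const_nhds (x := (1:ℝ)) (f := nhdsWithin (0:ℝ) (Set.Ioi 0))).sub hsum0
    simpa using this
  refine tendsto_of_tendsto_of_tendsto_of_le_of_le hl tendsto_const_nhds
    (fun ε => hlower1 ε) (fun ε => hupper1 ε)
end

section
/- Let p be a real-valued function differentiable on an open interval containing [b, a], with p'(v) < 0 for all v in that interval and with p' strictly increasing on that interval. If b < c < a, b < d < a, and a + b < c + d, then p(a) + p(b) > p(c) + p(d). -/
lemma stmt3_aux (p p' : ℝ → ℝ) (l r a b c d : ℝ)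
    (hsub : Set.Icc b a ⊆ Set.Ioo l r)
    (hderiv : ∀ x ∈ Set.Ioo l r, HasDerivAt p (p' x) x)
    (hneg : ∀ x ∈ Set.Ioo l r, p' x < 0)
    (hmono : StrictMonoOn p' (Set.Ioo l r))
    (hbc : b < c) (hca : c < a) (hbd : b < d) (hda : d < a)
    (hsum : a + b < c + d) (hcd : c ≤ d) :
    p c + p d < p a + p b := by
  have h1 : Set.Icc b c ⊆ Set.Ioo l r :=
    (Set.Icc_subset_Icc le_rfl hca.le).trans hsub
  have h2 : Set.Icc d a ⊆ Set.Ioo l r :=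
    (Set.Icc_subset_Icc hbd.le le_rfl).trans hsub
  have cont1 : ContinuousOn p (Set.Icc b c) := fun x hx =>
    ((hderiv x (h1 hx)).continuousAt).continuousWithinAt
  have cont2 : ContinuousOn p (Set.Icc d a) := fun x hx =>
    ((hderiv x (h2 hx)).continuousAt).continuousWithinAt
  obtain ⟨ξ₁, hξ₁, hs1⟩ := exists_hasDerivAt_eq_slope p p' hbc cont1
    (fun x hx => hderiv x (h1 (Set.Ioo_subset_Icc_self hx)))
  obtain ⟨ξ₂, hξ₂, hs2⟩ := exists_hasDerivAt_eq_slope p p' hda cont2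
    (fun x hx => hderiv x (h2 (Set.Ioo_subset_Icc_self hx)))
  have hm1 : ξ₁ ∈ Set.Ioo l r := h1 (Set.Ioo_subset_Icc_self hξ₁)
  have hm2 : ξ₂ ∈ Set.Ioo l r := h2 (Set.Ioo_subset_Icc_self hξ₂)
  have hlt : p' ξ₁ < p' ξ₂ := hmono hm1 hm2 (by
    have := hξ₁.2; have := hξ₂.1; linarith)
  have hneg2 : p' ξ₂ < 0 := hneg ξ₂ hm2
  have e1 : p c - p b = p' ξ₁ * (c - b) := by
    have : p c - p b = (p c - p b) / (c - b) * (c - b) :=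
      (div_mul_cancel₀ _ (by linarith : c - b ≠ 0)).symm
    rw [this, hs1]
  have e2 : p a - p d = p' ξ₂ * (a - d) := by
    have : p a - p d = (p a - p d) / (a - d) * (a - d) :=
      (div_mul_cancel₀ _ (by linarith : a - d ≠ 0)).symm
    rw [this, hs2]
  nlinarith [mul_lt_mul_of_pos_right hlt (by linarith : (0:ℝ) < c - b),
    mul_lt_mul_of_neg_left (by linarith : a - d < c - b) hneg2]

/-- If `p` is differentiable on an open interval containing `[b,a]`, with `p' < 0`
and `p'` strictly increasing there, and `b < c < a`, `b < d < a`, `a + b < c + d`,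
then `p(a) + p(b) > p(c) + p(d)`. -/
theorem stmt3 (p p' : ℝ → ℝ) (l r a b c d : ℝ)
    (hsub : Set.Icc b a ⊆ Set.Ioo l r)
    (hderiv : ∀ x ∈ Set.Ioo l r, HasDerivAt p (p' x) x)
    (hneg : ∀ x ∈ Set.Ioo l r, p' x < 0)
    (hmono : StrictMonoOn p' (Set.Ioo l r))
    (hbc : b < c) (hca : c < a) (hbd : b < d) (hda : d < a)
    (hsum : a + b < c + d) :
    p c + p d < p a + p b := by
  rcases le_total c d with h | h
  · exact stmt3_aux p p' l r a b c d hsub hderiv hneg hmono hbc hca hbd hda hsum h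
  · have := stmt3_aux p p' l r a b d c hsub hderiv hneg hmono hbd hda hbc hca
      (by linarith) h
    linarith
end

section
/- Let u > 0 and δ ∈ (0,1). For ε ∈ (0, 1/u) set H(ε) = 1 − εu and N(ε) = ⌈log δ / log H(ε)⌉. Then lim_{ε→0+} εu · Σ_{t=1}^{N(ε)} log(1 − H(ε)^t) = − Σ_{ℓ=1}^∞ (1 − δ^ℓ)/ℓ², the series on the right being convergent. -/
open Filter Finset

/-- geometric sum identity on `Icc 1 N`. -/
lemma aux_geom (y : ℝ) (N : ℕ) :
    (1 - y) * (∑ t ∈ Finset.Icc 1 N, y ^ t) = y * (1 - y ^ N) := by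
  have h := geom_sum_Ico_mul y (Nat.succ_le_succ (Nat.zero_le N))
  rw [← Finset.Ico_add_one_right_eq_Icc]
  have h2 : y ^ (N + 1) = y ^ N * y := pow_succ y N
  simp only [Nat.succ_eq_add_one, pow_one] at h
  linear_combination -h - h2

/-- lower bound `1 - H^(m+1) ≥ (m+1) H^m (1-H)` for `0 ≤ H ≤ 1`. -/
lemma aux_lb (H : ℝ) (hH0 : 0 ≤ H) (hH1 : H ≤ 1) (m : ℕ) :
    ((m : ℝ) + 1) * H ^ m * (1 - H) ≤ 1 - H ^ (m + 1) := by
  have hG : ((m : ℝ) + 1) * H ^ m ≤ ∑ j ∈ Finset.range (m + 1), H ^ j := by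
    have := Finset.card_nsmul_le_sum (Finset.range (m + 1)) (fun j => H ^ j) (H ^ m)
      (fun j hj => pow_le_pow_of_le_one hH0 hH1 (Nat.lt_succ_iff.mp (Finset.mem_range.mp hj)))
    simpa [nsmul_eq_mul] using this
  have hid := geom_sum_mul H (m + 1)
  nlinarith [hG, hid]

/-- the domination bound. -/
lemma aux_bound (H : ℝ) (hH0 : 0 < H) (hH1 : H < 1) (N ℓ : ℕ) :
    (1 - H) * ∑ t ∈ Finset.Icc 1 N, (H ^ t) ^ (ℓ + 1) / ((ℓ : ℝ) + 1) ≤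
      1 / ((ℓ : ℝ) + 1) ^ 2 := by
  set c : ℝ := (ℓ : ℝ) + 1 with hc
  have hcpos : 0 < c := by positivity
  set y : ℝ := H ^ (ℓ + 1) with hy
  have hS : (∑ t ∈ Finset.Icc 1 N, (H ^ t) ^ (ℓ + 1) / ((ℓ : ℝ) + 1)) =
      (∑ t ∈ Finset.Icc 1 N, y ^ t) / c := by
    rw [← Finset.sum_div]
    congr 1
    exact Finset.sum_congr rfl fun t _ => by rw [hy, pow_right_comm]
  rw [hS]
  set S : ℝ := ∑ t ∈ Finset.Icc 1 N, y ^ t with hSdef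
  have hS0 : 0 ≤ S := Finset.sum_nonneg fun t _ => pow_nonneg (pow_nonneg hH0.le _) _
  have hgeom : (1 - y) * S = y * (1 - y ^ N) := aux_geom y N
  have hyN : 0 ≤ y ^ N := pow_nonneg (pow_nonneg hH0.le _) _
  have hy0 : 0 < y := pow_pos hH0 _
  have h2 : (1 - y) * S ≤ y := by nlinarith
  have h1 : c * H ^ ℓ * (1 - H) ≤ 1 - y := aux_lb H hH0.le hH1.le ℓ
  have hHl : (0 : ℝ) < H ^ ℓ := pow_pos hH0 ℓ
  have key : c * ((1 - H) * S) ≤ 1 := by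
    have e1 : c * H ^ ℓ * (1 - H) * S ≤ (1 - y) * S := mul_le_mul_of_nonneg_right h1 hS0
    have e3 : y = H * H ^ ℓ := by rw [hy, pow_succ]; ring
    have : c * ((1 - H) * S) * H ^ ℓ ≤ 1 * H ^ ℓ := by nlinarith
    exact le_of_mul_le_mul_right (by linarith) hHl
  rw [mul_div_assoc', div_le_div_iff₀ (by positivity) (by positivity)]
  nlinarith [mul_le_mul_of_nonneg_left key hcpos.le]

/-- bounds on `H^N`. -/
lemma aux_N_bounds (δ H : ℝ) (hδ0 : 0 < δ) (hδ1 : δ < 1) (hH0 : 0 < H) (hH1 : H < 1) :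
    H * δ ≤ H ^ (⌈Real.log δ / Real.log H⌉.toNat) ∧
    H ^ (⌈Real.log δ / Real.log H⌉.toNat) ≤ δ := by
  have hδln : Real.log δ < 0 := Real.log_neg hδ0 hδ1
  have hHln : Real.log H < 0 := Real.log_neg hH0 hH1
  set r : ℝ := Real.log δ / Real.log H with hr
  have hrpos : 0 < r := div_pos_iff.mpr (Or.inr ⟨hδln, hHln⟩)
  have hceil : 0 < ⌈r⌉ := Int.ceil_pos.mpr hrpos
  set N : ℕ := ⌈r⌉.toNat with hN
  have hNr : ((N : ℕ) : ℝ) = ((⌈r⌉ : ℤ) : ℝ) := by exact_mod_cast Int.toNat_of_nonneg hceil.le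
  have h1N : 1 ≤ N := by omega
  have hcancel : r * Real.log H = Real.log δ := div_mul_cancel₀ _ hHln.ne
  constructor
  · -- H * δ ≤ H ^ N
    have hub : (N : ℝ) < r + 1 := by rw [hNr]; exact Int.ceil_lt_add_one r
    have hlog : Real.log δ < ((N : ℝ) - 1) * Real.log H := by nlinarith
    have hcast : ((N - 1 : ℕ) : ℝ) = (N : ℝ) - 1 := by
      push_cast [Nat.cast_sub h1N]; ring
    have hlogpow : Real.log δ < Real.log (H ^ (N - 1)) := by
      rw [Real.log_pow, hcast]; exact hlog
    have hδlt : δ ≤ H ^ (N - 1) := by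
      calc δ = Real.exp (Real.log δ) := (Real.exp_log hδ0).symm
        _ ≤ Real.exp (Real.log (H ^ (N - 1))) := Real.exp_le_exp.mpr hlogpow.le
        _ = H ^ (N - 1) := Real.exp_log (pow_pos hH0 _)
    have : H * δ ≤ H * H ^ (N - 1) := mul_le_mul_of_nonneg_left hδlt hH0.le
    calc H * δ ≤ H * H ^ (N - 1) := this
      _ = H ^ (N - 1 + 1) := by rw [pow_succ]; ring
      _ = H ^ N := by congr 1; omega
  · -- H ^ N ≤ δ
    have hle : r ≤ (N : ℝ) := by rw [hNr]; exact Int.le_ceil r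
    have hlog : ((N : ℝ)) * Real.log H ≤ Real.log δ := by nlinarith
    have hlogpow : Real.log (H ^ N) ≤ Real.log δ := by rw [Real.log_pow]; exact hlog
    calc H ^ N = Real.exp (Real.log (H ^ N)) := (Real.exp_log (pow_pos hH0 _)).symm
      _ ≤ Real.exp (Real.log δ) := Real.exp_le_exp.mpr hlogpow
      _ = δ := Real.exp_log hδ0

/-- With `H(ε) = 1 − εu` and `N(ε) = ⌈log δ / log H(ε)⌉`,
`εu · ∑_{t=1}^{N(ε)} log(1 − H(ε)^t) → −∑_{ℓ=1}^∞ (1 − δ^ℓ)/ℓ²` as `ε → 0⁺`,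
the series on the right being convergent. -/
theorem stmt6 (u δ : ℝ) (hu : 0 < u) (hδ0 : 0 < δ) (hδ1 : δ < 1) :
    Summable (fun ℓ : ℕ => (1 - δ ^ (ℓ + 1)) / ((ℓ : ℝ) + 1) ^ 2) ∧
    Tendsto
      (fun ε : ℝ => ε * u *
        ∑ t ∈ Finset.Icc 1 (⌈Real.log δ / Real.log (1 - ε * u)⌉.toNat),
          Real.log (1 - (1 - ε * u) ^ t))
      (nhdsWithin 0 (Set.Ioi 0))
      (nhds (-(∑' ℓ : ℕ, (1 - δ ^ (ℓ + 1)) / ((ℓ : ℝ) + 1) ^ 2))) := by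
  have hbound_sum : Summable (fun ℓ : ℕ => 1 / ((ℓ : ℝ) + 1) ^ 2) := by
    have h2 : Summable (fun n : ℕ => 1 / (n : ℝ) ^ 2) := by
      simpa using Real.summable_one_div_nat_pow.mpr one_lt_two
    have := (summable_nat_add_iff 1).mpr h2
    refine this.congr fun n => ?_
    push_cast
    ring
  have hsumg : Summable (fun ℓ : ℕ => (1 - δ ^ (ℓ + 1)) / ((ℓ : ℝ) + 1) ^ 2) := by
    refine Summable.of_nonneg_of_le (fun ℓ => ?_) (fun ℓ => ?_) hbound_sum
    · have h1 : δ ^ (ℓ + 1) ≤ 1 := pow_le_one₀ hδ0.le hδ1.le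
      exact div_nonneg (by linarith) (by positivity)
    · have h2 : (0:ℝ) < δ ^ (ℓ + 1) := pow_pos hδ0 _
      have hc2 : (0:ℝ) < ((ℓ:ℝ) + 1) ^ 2 := by positivity
      exact (div_le_div_iff_of_pos_right hc2).mpr (by linarith)
  refine ⟨hsumg, ?_⟩
  set l := nhdsWithin (0 : ℝ) (Set.Ioi 0) with hl
  set Nf : ℝ → ℕ := fun ε => (⌈Real.log δ / Real.log (1 - ε * u)⌉).toNat with hNf
  set F : ℝ → ℕ → ℝ := fun ε ℓ =>
    ε * u * ∑ t ∈ Finset.Icc 1 (Nf ε), ((1 - ε * u) ^ t) ^ (ℓ + 1) / ((ℓ : ℝ) + 1) with hF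
  have hev : ∀ᶠ ε in l, 0 < ε ∧ ε * u < 1 := by
    have h : Set.Ioo (0 : ℝ) (1 / u) ∈ nhdsWithin (0:ℝ) (Set.Ioi 0) :=
      Ioo_mem_nhdsGT_of_mem ⟨le_refl 0, by positivity⟩
    filter_upwards [h] with ε hε
    exact ⟨hε.1, (lt_div_iff₀ hu).mp hε.2⟩
  have hHt : Tendsto (fun ε : ℝ => 1 - ε * u) l (nhds 1) := by
    have : Tendsto (fun ε : ℝ => 1 - ε * u) (nhds 0) (nhds (1 - 0 * u)) :=
      (continuous_const.sub (continuous_id.mul continuous_const)).tendsto 0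
    simpa using this.mono_left nhdsWithin_le_nhds
  have hHN : Tendsto (fun ε => (1 - ε * u) ^ Nf ε) l (nhds δ) := by
    have hlow : Tendsto (fun ε : ℝ => (1 - ε * u) * δ) l (nhds δ) := by
      simpa using hHt.mul_const δ
    refine tendsto_of_tendsto_of_tendsto_of_le_of_le' hlow tendsto_const_nhds ?_ ?_
    · filter_upwards [hev] with ε hε
      have hH0 : 0 < 1 - ε * u := by linarith [hε.2]
      have hH1 : 1 - ε * u < 1 := by nlinarith [mul_pos hε.1 hu]
      exact (aux_N_bounds δ _ hδ0 hδ1 hH0 hH1).1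
    · filter_upwards [hev] with ε hε
      have hH0 : 0 < 1 - ε * u := by linarith [hε.2]
      have hH1 : 1 - ε * u < 1 := by nlinarith [mul_pos hε.1 hu]
      exact (aux_N_bounds δ _ hδ0 hδ1 hH0 hH1).2
  have hlim : ∀ ℓ : ℕ, Tendsto (F · ℓ) l (nhds ((1 - δ ^ (ℓ + 1)) / ((ℓ : ℝ) + 1) ^ 2)) := by
    intro ℓ
    have hcpos : (0:ℝ) < (ℓ : ℝ) + 1 := by positivity
    have hGt : Tendsto (fun ε : ℝ => ∑ j ∈ Finset.range (ℓ + 1), (1 - ε * u) ^ j) l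
        (nhds ((ℓ : ℝ) + 1)) := by
      have h := tendsto_finset_sum (Finset.range (ℓ + 1)) (fun j (_ : j ∈ Finset.range (ℓ+1)) => hHt.pow j)
      have he : (∑ _j ∈ Finset.range (ℓ + 1), ((1:ℝ))) = (ℓ : ℝ) + 1 := by
        simp
      simp only [one_pow] at h
      rw [← he]
      exact h
    have hfrac : Tendsto (fun ε : ℝ => (1 - (1 - ε * u)) / (1 - (1 - ε * u) ^ (ℓ + 1))) l
        (nhds (1 / ((ℓ : ℝ) + 1))) := by
      have hbase : Tendsto (fun ε : ℝ => 1 / ∑ j ∈ Finset.range (ℓ + 1), (1 - ε * u) ^ j) l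
          (nhds (1 / ((ℓ : ℝ) + 1))) := tendsto_const_nhds.div hGt hcpos.ne'
      refine hbase.congr' ?_
      filter_upwards [hev] with ε hε
      have hH0 : 0 < 1 - ε * u := by linarith [hε.2]
      have hH1 : 1 - ε * u < 1 := by nlinarith [mul_pos hε.1 hu]
      have hy1 : (1 - ε * u) ^ (ℓ + 1) < 1 := pow_lt_one₀ hH0.le hH1 (Nat.succ_ne_zero ℓ)
      have hG1 : (1:ℝ) ≤ ∑ j ∈ Finset.range (ℓ + 1), (1 - ε * u) ^ j := by
        have := Finset.single_le_sum (f := fun j => (1 - ε * u) ^ j)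
          (fun j _ => pow_nonneg hH0.le j) (Finset.mem_range.mpr (Nat.succ_pos ℓ))
        simpa using this
      have hid := geom_sum_mul (1 - ε * u) (ℓ + 1)
      rw [div_eq_div_iff (by linarith) (by linarith)]
      linear_combination hid
    have hP : Tendsto (fun ε : ℝ =>
        ((1 - (1 - ε * u)) / (1 - (1 - ε * u) ^ (ℓ + 1))) *
          ((1 - ε * u) ^ (ℓ + 1) * (1 - ((1 - ε * u) ^ Nf ε) ^ (ℓ + 1)) / ((ℓ : ℝ) + 1))) l
        (nhds ((1 / ((ℓ : ℝ) + 1)) * ((1:ℝ) ^ (ℓ + 1) * (1 - δ ^ (ℓ + 1)) / ((ℓ : ℝ) + 1)))) :=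
      hfrac.mul (((hHt.pow (ℓ + 1)).mul (tendsto_const_nhds.sub (hHN.pow (ℓ + 1)))).div_const _)
    have heq : ((1 / ((ℓ : ℝ) + 1)) * ((1:ℝ) ^ (ℓ + 1) * (1 - δ ^ (ℓ + 1)) / ((ℓ : ℝ) + 1))) =
        (1 - δ ^ (ℓ + 1)) / ((ℓ : ℝ) + 1) ^ 2 := by
      rw [one_pow, div_mul_div_comm, ← pow_two]
      simp
    rw [heq] at hP
    refine hP.congr' ?_
    filter_upwards [hev] with ε hε
    have hH0 : 0 < 1 - ε * u := by linarith [hε.2]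
    have hH1 : 1 - ε * u < 1 := by nlinarith [mul_pos hε.1 hu]
    have hy1 : (1 - ε * u) ^ (ℓ + 1) < 1 := pow_lt_one₀ hH0.le hH1 (Nat.succ_ne_zero ℓ)
    have hSrw : (∑ t ∈ Finset.Icc 1 (Nf ε), ((1 - ε * u) ^ t) ^ (ℓ + 1) / ((ℓ:ℝ) + 1)) =
        (∑ t ∈ Finset.Icc 1 (Nf ε), ((1 - ε * u) ^ (ℓ + 1)) ^ t) / ((ℓ:ℝ) + 1) := by
      rw [← Finset.sum_div]
      congr 1
      exact Finset.sum_congr rfl fun t _ => by rw [pow_right_comm]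
    have hgeom : (1 - (1 - ε * u) ^ (ℓ + 1)) * ∑ t ∈ Finset.Icc 1 (Nf ε), ((1 - ε * u) ^ (ℓ + 1)) ^ t
        = (1 - ε * u) ^ (ℓ + 1) * (1 - ((1 - ε * u) ^ (ℓ + 1)) ^ (Nf ε)) :=
      aux_geom _ (Nf ε)
    have hyN : ((1 - ε * u) ^ Nf ε) ^ (ℓ + 1) = ((1 - ε * u) ^ (ℓ + 1)) ^ (Nf ε) :=
      pow_right_comm _ _ _
    show ((1 - (1 - ε * u)) / (1 - (1 - ε * u) ^ (ℓ + 1))) *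
          ((1 - ε * u) ^ (ℓ + 1) * (1 - ((1 - ε * u) ^ Nf ε) ^ (ℓ + 1)) / ((ℓ : ℝ) + 1))
        = ε * u * ∑ t ∈ Finset.Icc 1 (Nf ε), ((1 - ε * u) ^ t) ^ (ℓ + 1) / ((ℓ : ℝ) + 1)
    rw [hSrw, hyN, ← hgeom]
    have h1y : (1 : ℝ) - (1 - ε * u) ^ (ℓ + 1) ≠ 0 := by linarith
    field_simp
    ring
  have hb : ∀ᶠ ε in l, ∀ ℓ : ℕ, ‖F ε ℓ‖ ≤ 1 / ((ℓ : ℝ) + 1) ^ 2 := by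
    filter_upwards [hev] with ε hε ℓ
    have hH0 : 0 < 1 - ε * u := by linarith [hε.2]
    have hH1 : 1 - ε * u < 1 := by nlinarith [mul_pos hε.1 hu]
    have hnn : 0 ≤ F ε ℓ := by
      refine mul_nonneg (mul_nonneg hε.1.le hu.le) (Finset.sum_nonneg fun t _ => ?_)
      exact div_nonneg (pow_nonneg (pow_nonneg hH0.le _) _) (by positivity)
    rw [Real.norm_eq_abs, abs_of_nonneg hnn]
    have h := aux_bound (1 - ε * u) hH0 hH1 (Nf ε) ℓ
    have e : (1:ℝ) - (1 - ε * u) = ε * u := by ring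
    rw [e] at h
    exact h
  have main := tendsto_tsum_of_dominated_convergence hbound_sum hlim hb
  refine (main.neg).congr' ?_
  filter_upwards [hev] with ε hε
  have hH0 : 0 < 1 - ε * u := by linarith [hε.2]
  have hH1 : 1 - ε * u < 1 := by nlinarith [mul_pos hε.1 hu]
  have hhs : ∀ t ∈ Finset.Icc 1 (Nf ε),
      HasSum (fun ℓ : ℕ => ((1 - ε * u) ^ t) ^ (ℓ + 1) / ((ℓ : ℝ) + 1))
        (-Real.log (1 - (1 - ε * u) ^ t)) := by
    intro t ht
    have h1t : 1 ≤ t := (Finset.mem_Icc.mp ht).1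
    have hle : (1 - ε * u) ^ t ≤ 1 - ε * u := by
      calc (1 - ε * u) ^ t ≤ (1 - ε * u) ^ 1 := pow_le_pow_of_le_one hH0.le hH1.le h1t
        _ = 1 - ε * u := pow_one _
    have habs : |(1 - ε * u) ^ t| < 1 := by
      rw [abs_of_pos (pow_pos hH0 t)]; linarith
    exact Real.hasSum_pow_div_log_of_abs_lt_one habs
  have key : ∑' ℓ : ℕ, F ε ℓ =
      -(ε * u * ∑ t ∈ Finset.Icc 1 (Nf ε), Real.log (1 - (1 - ε * u) ^ t)) := by
    calc ∑' ℓ : ℕ, F ε ℓ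
        = ε * u * ∑' ℓ : ℕ, ∑ t ∈ Finset.Icc 1 (Nf ε),
            ((1 - ε * u) ^ t) ^ (ℓ + 1) / ((ℓ : ℝ) + 1) := by
          simp only [hF]; exact tsum_mul_left
      _ = ε * u * ∑ t ∈ Finset.Icc 1 (Nf ε), ∑' ℓ : ℕ,
            ((1 - ε * u) ^ t) ^ (ℓ + 1) / ((ℓ : ℝ) + 1) := by
          rw [Summable.tsum_finsetSum fun t ht => (hhs t ht).summable]
      _ = ε * u * ∑ t ∈ Finset.Icc 1 (Nf ε), -Real.log (1 - (1 - ε * u) ^ t) := by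
          congr 1
          exact Finset.sum_congr rfl fun t ht => (hhs t ht).tsum_eq
      _ = -(ε * u * ∑ t ∈ Finset.Icc 1 (Nf ε), Real.log (1 - (1 - ε * u) ^ t)) := by
          rw [Finset.sum_neg_distrib]; ring
  show -∑' ℓ : ℕ, F ε ℓ = ε * u * ∑ t ∈ Finset.Icc 1 (Nf ε), Real.log (1 - (1 - ε * u) ^ t)
  rw [key]
  ring
end

section
/- Let ε > 0, let L, U be reals with 0 < εL ≤ εU < 1, and let δ ∈ (0,1). Let φ : ℕ → ℝ satisfy L ≤ φ(t) ≤ U for all t, and let x : ℕ → ℝ satisfy x(0) = 0 and x(t+1) = x(t) + ε·φ(t)·(1 − x(t)). Then: (i) every t ∈ ℕ with x(t) > 1 − δ satisfies t ≥ ⌈log δ / log(1 − εU)⌉; and (ii) x(t) ≥ 1 − δ for every t ≥ ⌈log δ / log(1 − εL)⌉. In particular the first time x exceeds the level 1 − δ lies between ⌈log δ / log(1 − εU)⌉ and ⌈log δ / log(1 − εL)⌉. -/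
/-- Hitting-time bounds for the reinforcement recursion `x(t+1) = x(t) + ε·φ(t)·(1 − x(t))`,
`x(0) = 0`, with `L ≤ φ(t) ≤ U`, `0 < εL ≤ εU < 1` and `δ ∈ (0,1)`:
(i) any `t` with `x(t) > 1 − δ` satisfies `t ≥ ⌈log δ / log(1 − εU)⌉`, and
(ii) `x(t) ≥ 1 − δ` for every `t ≥ ⌈log δ / log(1 − εL)⌉`. -/
theorem stmt9 (ε L U δ : ℝ) (hε : 0 < ε)
    (hL0 : 0 < ε * L) (hLU : ε * L ≤ ε * U) (hU1 : ε * U < 1)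
    (hδ0 : 0 < δ) (hδ1 : δ < 1)
    (φ x : ℕ → ℝ)
    (hφ : ∀ t, L ≤ φ t ∧ φ t ≤ U)
    (hx0 : x 0 = 0)
    (hrec : ∀ t, x (t + 1) = x t + ε * φ t * (1 - x t)) :
    (∀ t : ℕ, 1 - δ < x t → ⌈Real.log δ / Real.log (1 - ε * U)⌉ ≤ (t : ℤ)) ∧
    (∀ t : ℕ, ⌈Real.log δ / Real.log (1 - ε * L)⌉ ≤ (t : ℤ) → 1 - δ ≤ x t) := by
  have hU0 : 0 < 1 - ε * U := by linarith
  have hU1' : 1 - ε * U < 1 := by linarith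
  have hL0' : 0 < 1 - ε * L := by linarith
  have hL1' : 1 - ε * L < 1 := by linarith
  have key : ∀ t : ℕ, (1 - ε * U) ^ t ≤ 1 - x t ∧ 1 - x t ≤ (1 - ε * L) ^ t := by
    intro t
    induction t with
    | zero => simp [hx0]
    | succ n ih =>
      obtain ⟨h1, h2⟩ := ih
      obtain ⟨hφ1, hφ2⟩ := hφ n
      have hφL : ε * L ≤ ε * φ n := by nlinarith
      have hφU : ε * φ n ≤ ε * U := by nlinarith
      have heq : 1 - x (n + 1) = (1 - ε * φ n) * (1 - x n) := by
        rw [hrec n]; ring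
      have hxn0 : 0 ≤ 1 - x n := le_trans (pow_nonneg hU0.le n) h1
      constructor
      · rw [heq, pow_succ']
        have := pow_nonneg hU0.le n
        nlinarith
      · rw [heq, pow_succ']
        have := pow_nonneg hU0.le n
        nlinarith
  have hlogU : Real.log (1 - ε * U) < 0 := Real.log_neg hU0 hU1'
  have hlogL : Real.log (1 - ε * L) < 0 := Real.log_neg hL0' hL1'
  have hlogδ : Real.log δ < 0 := Real.log_neg hδ0 hδ1
  constructor
  · intro t ht
    have h1 : (1 - ε * U) ^ t < δ := lt_of_le_of_lt (key t).1 (by linarith)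
    have h2 : (t : ℝ) * Real.log (1 - ε * U) < Real.log δ := by
      calc (t : ℝ) * Real.log (1 - ε * U) = Real.log ((1 - ε * U) ^ t) := by
            rw [Real.log_pow]
        _ < Real.log δ := Real.log_lt_log (pow_pos hU0 t) h1
    have h3 : Real.log δ / Real.log (1 - ε * U) < (t : ℝ) := by
      rw [div_lt_iff_of_neg hlogU]; linarith
    exact_mod_cast Int.ceil_le.mpr (le_of_lt (by exact_mod_cast h3))
  · intro t ht
    have h3 : Real.log δ / Real.log (1 - ε * L) ≤ (t : ℝ) := by
      have := Int.ceil_le.mp ht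
      exact_mod_cast this
    have h2 : (t : ℝ) * Real.log (1 - ε * L) ≤ Real.log δ := by
      rw [div_le_iff_of_neg hlogL] at h3; linarith
    have h1 : (1 - ε * L) ^ t ≤ δ := by
      have := Real.exp_le_exp.mpr h2
      rwa [← Real.log_pow, Real.exp_log (pow_pos hL0' t), Real.exp_log hδ0] at this
    have := (key t).2
    linarith
end

section
/- Let a finite weakly acyclic strategic-form game be given. For every action profile α ∉ A_NE and every {α}-graph g on A all of whose edges are one-step transitions, there exist a pure Nash equilibrium α* ∈ A_NE and an {α*}-graph g* on A, all of whose edges are one-step transitions, such that the number of edges of g* that are not better-reply edges is strictly smaller than the number of edges of g that are not better-reply edges. -/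
attribute [local instance] Classical.propDecidable

/-- `β` is a better reply of player `i` to `α`. -/
def BetterReply {I : Type*} {A : I → Type*} (u : (i : I) → ((j : I) → A j) → ℝ)
    (i : I) (α β : (j : I) → A j) : Prop :=
  (∀ j, j ≠ i → β j = α j) ∧ u i α < u i β

/-- A pure Nash equilibrium: no player has a better reply. -/
def IsNashEq {I : Type*} {A : I → Type*} (u : (i : I) → ((j : I) → A j) → ℝ)
    (α : (j : I) → A j) : Prop :=
  ∀ i β, ¬ BetterReply u i α β

/-- `β` differs from `α` in the action of exactly one player. -/
def OneStep {I : Type*} {A : I → Type*} (α β : (j : I) → A j) : Prop :=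
  ∃ i, β i ≠ α i ∧ ∀ j, j ≠ i → β j = α j

lemma exists_fin_chain {S : Type*} {r : S → S → Prop} {a b : S}
    (h : Relation.ReflTransGen r a b) :
    ∃ n : ℕ, ∃ c : ℕ → S, c 0 = a ∧ c n = b ∧ ∀ t < n, r (c t) (c (t+1)) := by
  induction h with
  | refl => exact ⟨0, fun _ => a, rfl, rfl, by omega⟩
  | @tail x y hax hxy ih =>
    obtain ⟨n, c, h0, hn, hs⟩ := ih
    refine ⟨n+1, fun t => if t ≤ n then c t else y, by simp [h0], by simp, ?_⟩
    intro t ht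
    by_cases h1 : t + 1 ≤ n
    · simp only [if_pos (by omega : t ≤ n), if_pos h1]
      exact hs t (by omega)
    · have ht' : t = n := by omega
      subst ht'
      simp only [if_pos le_rfl, if_neg (by omega : ¬ t + 1 ≤ t), hn]
      exact hxy

lemma br_onestep {I : Type*} {A : I → Type*} {u : (i : I) → ((j : I) → A j) → ℝ}
    {i : I} {x y : (j : I) → A j} (h : BetterReply u i x y) :
    y ≠ x ∧ OneStep x y := by
  obtain ⟨hj, hu⟩ := h
  have hne : y i ≠ x i := by
    intro he
    have : y = x := funext fun j => by
      by_cases hji : j = i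
      · subst hji; exact he
      · exact hj j hji
    rw [this] at hu; exact lt_irrefl _ hu
  exact ⟨fun h => hne (congrFun h i), ⟨i, hne, hj⟩⟩

/-- In a finite weakly acyclic game, for every non-Nash profile `α` and every one-step
`{α}`-graph `g`, there are a pure Nash equilibrium `α*` and a one-step `{α*}`-graph `g*`
with strictly fewer non-better-reply edges than `g`. -/
theorem stmt12 {I : Type*} [Fintype I] [DecidableEq I] {A : I → Type*}
    [∀ i, Fintype (A i)] [∀ i, Nonempty (A i)]
    (u : (i : I) → ((j : I) → A j) → ℝ)
    (hwa : ∀ α : (j : I) → A j, ∃ β, Relation.ReflTransGen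
        (fun x y => ∃ i, BetterReply u i x y) α β ∧ IsNashEq u β)
    (α : (j : I) → A j) (hα : ¬ IsNashEq u α)
    (g : ((j : I) → A j) → ((j : I) → A j))
    (hg : ∀ β, β ≠ α → (g β ≠ β ∧ OneStep β (g β) ∧ ∃ n : ℕ, g^[n] β = α)) :
    ∃ αstar, IsNashEq u αstar ∧
      ∃ gstar : ((j : I) → A j) → ((j : I) → A j),
        (∀ β, β ≠ αstar →
          (gstar β ≠ β ∧ OneStep β (gstar β) ∧ ∃ n : ℕ, gstar^[n] β = αstar)) ∧
        (Finset.univ.filter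
            (fun β => β ≠ αstar ∧ ¬ ∃ i, BetterReply u i β (gstar β))).card <
          (Finset.univ.filter
            (fun β => β ≠ α ∧ ¬ ∃ i, BetterReply u i β (g β))).card := by
  classical
  set R : ((j : I) → A j) → ((j : I) → A j) → Prop :=
    fun x y => ∃ i, BetterReply u i x y with hR
  obtain ⟨αstar, hpath, hNE⟩ := hwa α
  -- minimal chain length
  set P : ℕ → Prop := fun n => ∃ c : ℕ → ((j : I) → A j),
      c 0 = α ∧ c n = αstar ∧ ∀ t < n, R (c t) (c (t+1)) with hPdef
  have hP : ∃ n, P n := by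
    obtain ⟨n, c, h0, hn, hs⟩ := exists_fin_chain hpath
    exact ⟨n, c, h0, hn, hs⟩
  set n₀ := Nat.find hP with hn₀def
  obtain ⟨c, hc0, hcn, hcs⟩ := Nat.find_spec hP
  have hαne : α ≠ αstar := by
    intro h; exact hα (h ▸ hNE)
  have hn₀pos : 0 < n₀ := by
    rcases Nat.eq_zero_or_pos n₀ with h | h
    · exact absurd (hc0 ▸ h ▸ hcn) hαne
    · exact h
  -- injectivity of c on [0, n₀]
  have hinj : ∀ i j, i ≤ n₀ → j ≤ n₀ → c i = c j → i = j := by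
    intro i j hi hj heq
    by_contra hne
    -- wlog i < j
    wlog hij : i < j generalizing i j
    · exact this j i hj hi heq.symm (Ne.symm hne) (by omega)
    set d := j - i with hd
    have hd0 : 0 < d := by omega
    have hPd : P (n₀ - d) := by
      refine ⟨fun t => if t ≤ i then c t else c (t + d), ?_, ?_, ?_⟩
      · simp [hc0]
      · have hile : i ≤ n₀ - d := by omega
        by_cases h : n₀ - d ≤ i
        · have h1 : n₀ - d = i := by omega
          have h2 : j = n₀ := by omega
          simp only [if_pos h]
          rw [h1, heq, h2, hcn]
        · simp only [if_neg h]
          have : n₀ - d + d = n₀ := by omega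
          rw [this, hcn]
      · intro t ht
        by_cases h1 : t + 1 ≤ i
        · simp only [if_pos (by omega : t ≤ i), if_pos h1]
          exact hcs t (by omega)
        · by_cases h2 : t ≤ i
          · have hti : t = i := by omega
            subst hti
            simp only [if_pos le_rfl, if_neg h1]
            have : t + 1 + d = j + 1 := by omega
            rw [this, heq]
            exact hcs j (by omega)
          · simp only [if_neg h2, if_neg (by omega : ¬ t + 1 ≤ i)]
            have : t + 1 + d = t + d + 1 := by omega
            rw [this]
            exact hcs (t + d) (by omega)
    have := Nat.find_min hP (show n₀ - d < n₀ by omega) hPd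
    exact this
  -- the new graph
  set gstar : ((j : I) → A j) → ((j : I) → A j) :=
    fun β => if h : ∃ t, t < n₀ ∧ c t = β then c (h.choose + 1) else g β with hgstar
  have honpath : ∀ t, t < n₀ → gstar (c t) = c (t + 1) := by
    intro t ht
    have h : ∃ s, s < n₀ ∧ c s = c t := ⟨t, ht, rfl⟩
    have hch := h.choose_spec
    have : h.choose = t := hinj _ _ (le_of_lt hch.1) (le_of_lt ht) hch.2
    simp only [hgstar, dif_pos h, this]
  have hoffpath : ∀ β, (¬ ∃ t, t < n₀ ∧ c t = β) → gstar β = g β := by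
    intro β h
    simp only [hgstar, dif_neg h]
  -- reachability along the path
  have hreachpath : ∀ d t, t + d = n₀ → gstar^[d] (c t) = αstar := by
    intro d
    induction d with
    | zero => intro t ht; simp only [Function.iterate_zero, id_eq]
              rw [show t = n₀ by omega, hcn]
    | succ d ih =>
      intro t ht
      rw [Function.iterate_succ_apply, honpath t (by omega)]
      exact ih (t + 1) (by omega)
  -- reachability off the path
  have hreach : ∀ k β, g^[k] β = α → β ≠ αstar → ∃ m, gstar^[m] β = αstar := by
    intro k
    induction k with
    | zero =>
      intro β hβ _
      simp only [Function.iterate_zero, id_eq] at hβ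
      subst hβ
      exact ⟨n₀, by have := hreachpath n₀ 0 (by omega); rwa [hc0] at this⟩
    | succ k ih =>
      intro β hβ hβne
      by_cases hon : ∃ t, t < n₀ ∧ c t = β
      · obtain ⟨t, ht, hct⟩ := hon
        exact ⟨n₀ - t, by rw [← hct]; exact hreachpath (n₀ - t) t (by omega)⟩
      · by_cases hgβ : g β = αstar
        · exact ⟨1, by rw [Function.iterate_one, hoffpath β hon]; exact hgβ⟩
        · obtain ⟨m, hm⟩ := ih (g β) (by rwa [Function.iterate_succ_apply] at hβ) hgβ
          exact ⟨m + 1, by rw [Function.iterate_succ_apply, hoffpath β hon]; exact hm⟩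
  refine ⟨αstar, hNE, gstar, ?_, ?_⟩
  · -- graph properties
    intro β hβ
    by_cases hon : ∃ t, t < n₀ ∧ c t = β
    · obtain ⟨t, ht, hct⟩ := hon
      subst hct
      rw [honpath t ht]
      obtain ⟨i, hbr⟩ := hcs t ht
      obtain ⟨hne, hos⟩ := br_onestep hbr
      refine ⟨hne, hos, n₀ - t, hreachpath (n₀ - t) t (by omega)⟩
    · have hβα : β ≠ α := by
        intro h; exact hon ⟨0, hn₀pos, by rw [hc0, h]⟩
      obtain ⟨h1, h2, k, h3⟩ := hg β hβα
      rw [hoffpath β hon]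
      exact ⟨h1, h2, hreach k β h3 hβ⟩
  · -- cardinality
    apply Finset.card_lt_card
    constructor
    · intro β hβ
      simp only [Finset.mem_filter, Finset.mem_univ, true_and] at hβ ⊢
      obtain ⟨hβne, hβbad⟩ := hβ
      by_cases hon : ∃ t, t < n₀ ∧ c t = β
      · exfalso
        obtain ⟨t, ht, hct⟩ := hon
        apply hβbad
        rw [← hct, honpath t ht]
        exact hcs t ht
      · have hβα : β ≠ α := by
          intro h; exact hon ⟨0, hn₀pos, by rw [hc0, h]⟩
        rw [hoffpath β hon] at hβbad
        exact ⟨hβα, hβbad⟩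
    · intro hsub
      have hmem : αstar ∈ Finset.univ.filter
          (fun β => β ≠ α ∧ ¬ ∃ i, BetterReply u i β (g β)) := by
        simp only [Finset.mem_filter, Finset.mem_univ, true_and]
        exact ⟨Ne.symm hαne, fun ⟨i, hbr⟩ => hNE i (g αstar) hbr⟩
      have := hsub hmem
      simp only [Finset.mem_filter, Finset.mem_univ, true_and] at this
      exact this.1 rfl
end

section
/- Every finite exact potential game is weakly acyclic: if there exists a function Φ : A → ℝ such that u_i(β) − u_i(α) = Φ(β) − Φ(α) whenever the action profiles α and β differ only in the action of player i, then from every action profile there is an improvement path ending at a pure Nash equilibrium; in particular, the game possesses at least one pure Nash equilibrium. -/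
/-- Every finite exact potential game is weakly acyclic: from every action profile
there is an improvement path ending at a pure Nash equilibrium; in particular a pure
Nash equilibrium exists. -/
theorem stmt13 {I : Type*} [Fintype I] [DecidableEq I] {A : I → Type*}
    [∀ i, Fintype (A i)] [∀ i, Nonempty (A i)]
    (u : (i : I) → ((j : I) → A j) → ℝ)
    (Φ : ((j : I) → A j) → ℝ)
    (hpot : ∀ (i : I) (α β : (j : I) → A j),
      (∀ j, j ≠ i → β j = α j) → u i β - u i α = Φ β - Φ α) :
    (∀ α : (j : I) → A j, ∃ β, Relation.ReflTransGen
        (fun x y => ∃ i, BetterReply u i x y) α β ∧ IsNashEq u β) ∧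
    (∃ α : (j : I) → A j, IsNashEq u α) := by
  classical
  have main : ∀ n (α : (j : I) → A j),
      (Finset.univ.filter (fun β => Φ α < Φ β)).card ≤ n →
      ∃ β, Relation.ReflTransGen (fun x y => ∃ i, BetterReply u i x y) α β ∧
        IsNashEq u β := by
    intro n
    induction n with
    | zero =>
      intro α h
      refine ⟨α, Relation.ReflTransGen.refl, ?_⟩
      intro i β hb
      have hΦ : Φ α < Φ β := by
        have := hpot i α β hb.1
        linarith [hb.2]
      have : β ∈ Finset.univ.filter (fun β => Φ α < Φ β) := by
        simp [hΦ]
      have := Finset.card_pos.mpr ⟨β, this⟩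
      omega
    | succ n ih =>
      intro α h
      by_cases hn : IsNashEq u α
      · exact ⟨α, Relation.ReflTransGen.refl, hn⟩
      · simp only [IsNashEq, not_forall, not_not] at hn
        obtain ⟨i, β, hb⟩ := hn
        have hΦ : Φ α < Φ β := by
          have := hpot i α β hb.1
          linarith [hb.2]
        have hsub : Finset.univ.filter (fun γ => Φ β < Φ γ) ⊂
            Finset.univ.filter (fun γ => Φ α < Φ γ) := by
          constructor
          · intro γ hγ
            simp only [Finset.mem_filter] at *
            exact ⟨Finset.mem_univ _, lt_trans hΦ hγ.2⟩
          · intro hcon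
            have := hcon (by simp [hΦ] : β ∈ _)
            simp at this
        have hcard : (Finset.univ.filter (fun γ => Φ β < Φ γ)).card ≤ n := by
          have := Finset.card_lt_card hsub
          omega
        obtain ⟨γ, hγ1, hγ2⟩ := ih β hcard
        exact ⟨γ, Relation.ReflTransGen.head ⟨i, hb⟩ hγ1, hγ2⟩
  have h1 : ∀ α : (j : I) → A j, ∃ β, Relation.ReflTransGen
      (fun x y => ∃ i, BetterReply u i x y) α β ∧ IsNashEq u β := by
    intro α
    exact main _ α le_rfl
  refine ⟨h1, ?_⟩
  obtain ⟨β, _, hβ⟩ := h1 (fun j => Classical.arbitrary (A j))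
  exact ⟨β, hβ⟩
end

section
/- Consider a finite weakly acyclic strategic-form game whose set S̄ of payoff-dominant pure Nash equilibria (profiles α* ∈ A_NE with u_i(α*) ≥ u_i(α') for every player i and every profile α') is nonempty. Assume: (i) from every action profile α ∉ A_NE there is a best-reply improvement path starting at α and ending in S̄; and (ii) every α* ∈ A_NE ∖ S̄ is a better reply of some player to some action profile. Then there exists an S̄-graph g* on A, all of whose edges are one-step transitions, such that every edge of g* starting at a profile not in A_NE is a better-reply edge; consequently the edges of g* that are not better-reply edges are exactly those starting at profiles in A_NE ∖ S̄, and their number is |A_NE ∖ S̄|. -/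
attribute [local instance] Classical.propDecidable

/-- A best reply: a better reply achieving the deviating player's maximal utility
among all better replies. -/
def BestReply {I : Type*} {A : I → Type*} (u : (i : I) → ((j : I) → A j) → ℝ)
    (i : I) (α β : (j : I) → A j) : Prop :=
  BetterReply u i α β ∧ ∀ γ, BetterReply u i α γ → u i γ ≤ u i β

/-- A payoff-dominant pure Nash equilibrium: a Nash equilibrium whose payoff to each
player is at least that player's payoff at every other profile. -/
def PayoffDominantEq {I : Type*} {A : I → Type*} (u : (i : I) → ((j : I) → A j) → ℝ)
    (α : (j : I) → A j) : Prop :=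
  IsNashEq u α ∧ ∀ (i : I) (α' : (j : I) → A j), u i α' ≤ u i α

section Aux

variable {I : Type*} [DecidableEq I] {A : I → Type*}

/-- There is a best-reply improvement path of length `n` from `β` to a
payoff-dominant equilibrium. -/
def ReachN (u : (i : I) → ((j : I) → A j) → ℝ) (n : ℕ) (β : (j : I) → A j) : Prop :=
  ∃ f : ℕ → ((j : I) → A j), f 0 = β ∧ PayoffDominantEq u (f n) ∧
    ∀ k < n, ∃ i, BestReply u i (f k) (f (k + 1))

lemma reach_zero (u : (i : I) → ((j : I) → A j) → ℝ) {β : (j : I) → A j}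
    (h : ReachN u 0 β) : PayoffDominantEq u β := by
  obtain ⟨f, h0, hPD, _⟩ := h; rwa [h0] at hPD

lemma reach_pos_not_nash (u : (i : I) → ((j : I) → A j) → ℝ) {n : ℕ}
    {β : (j : I) → A j} (h : ReachN u n β) (hn : 0 < n) : ¬ IsNashEq u β := by
  obtain ⟨f, h0, _, hch⟩ := h
  obtain ⟨i, hi⟩ := hch 0 hn
  rw [h0] at hi
  exact fun hN => hN i (f 1) hi.1

lemma reach_of_rtg (u : (i : I) → ((j : I) → A j) → ℝ) {α β : (j : I) → A j}
    (h : Relation.ReflTransGen (fun x y => ∃ i, BestReply u i x y) α β) :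
    ∀ n, ReachN u n β → ∃ m, ReachN u m α := by
  induction h with
  | refl => exact fun n hn => ⟨n, hn⟩
  | @tail b c _ hbc ih =>
    intro n hn
    obtain ⟨f, h0, hPD, hch⟩ := hn
    refine ih (n + 1) ⟨fun k => Nat.rec b (fun k _ => f k) k, rfl, hPD, ?_⟩
    intro k hk
    match k with
    | 0 =>
      show ∃ i, BestReply u i b (f 0)
      rw [h0]; exact hbc
    | k + 1 =>
      show ∃ i, BestReply u i (f k) (f (k + 1))
      exact hch k (by omega)

end Aux

section Aux2

variable {I : Type*} [DecidableEq I] {A : I → Type*}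
  (u : (i : I) → ((j : I) → A j) → ℝ)
  (hex : ∀ β : (j : I) → A j, ¬ IsNashEq u β → ∃ n, ReachN u n β)
  (hin : ∀ α : (j : I) → A j, IsNashEq u α → ¬ PayoffDominantEq u α →
      ∃ γ i, BetterReply u i γ α)

/-- The one-step `S̄`-graph. -/
noncomputable def gstar : ((j : I) → A j) → ((j : I) → A j) := fun β =>
  if hPD : PayoffDominantEq u β then β
  else if hN : IsNashEq u β then (hin β hN hPD).choose
  else (Nat.find_spec (hex β hN)).choose 1

lemma gstar_pd {β : (j : I) → A j} (h : PayoffDominantEq u β) :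
    gstar u hex hin β = β := by
  unfold gstar; rw [dif_pos h]

lemma gstar_nash {β : (j : I) → A j} (hN : IsNashEq u β)
    (hPD : ¬ PayoffDominantEq u β) :
    ∃ i, BetterReply u i (gstar u hex hin β) β := by
  unfold gstar; rw [dif_neg hPD, dif_pos hN]
  exact (hin β hN hPD).choose_spec

lemma gstar_not_nash {β : (j : I) → A j} (hN : ¬ IsNashEq u β) :
    (∃ i, BestReply u i β (gstar u hex hin β)) ∧
    ReachN u (Nat.find (hex β hN) - 1) (gstar u hex hin β) := by
  have hPD : ¬ PayoffDominantEq u β := fun h => hN h.1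
  unfold gstar; rw [dif_neg hPD, dif_neg hN]
  have hpos : 0 < Nat.find (hex β hN) := by
    rcases Nat.eq_zero_or_pos (Nat.find (hex β hN)) with h0' | h
    · have hr : ReachN u 0 β := h0' ▸ Nat.find_spec (hex β hN)
      exact absurd (reach_zero u hr) hPD
    · exact h
  obtain ⟨h0, hPDn, hch⟩ := (Nat.find_spec (hex β hN)).choose_spec
  refine ⟨?_, ?_⟩
  · obtain ⟨i, hi⟩ := hch 0 hpos
    rw [h0] at hi
    exact ⟨i, hi⟩
  · refine ⟨fun k => (Nat.find_spec (hex β hN)).choose (k + 1), rfl, ?_,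
      fun k hk => hch (k + 1) (by omega)⟩
    show PayoffDominantEq u
      ((Nat.find_spec (hex β hN)).choose (Nat.find (hex β hN) - 1 + 1))
    rw [Nat.sub_add_cancel hpos]
    exact hPDn

lemma gstar_iter : ∀ (m : ℕ) (β : (j : I) → A j),
    (PayoffDominantEq u β ∨ ∃ hN : ¬ IsNashEq u β, Nat.find (hex β hN) ≤ m) →
    PayoffDominantEq u ((gstar u hex hin)^[m] β) := by
  intro m
  induction m with
  | zero =>
    intro β h
    rcases h with h | ⟨hN, hle⟩
    · simpa using h
    · have h0 : Nat.find (hex β hN) = 0 := Nat.le_zero.mp hle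
      have hsp : ReachN u 0 β := h0 ▸ Nat.find_spec (hex β hN)
      simpa using reach_zero u hsp
  | succ m ih =>
    intro β h
    rw [Function.iterate_succ_apply]
    rcases h with h | ⟨hN, hle⟩
    · rw [gstar_pd u hex hin h]; exact ih β (Or.inl h)
    · obtain ⟨_, hre⟩ := gstar_not_nash u hex hin hN
      by_cases hPDγ : PayoffDominantEq u (gstar u hex hin β)
      · exact ih _ (Or.inl hPDγ)
      · have hpos : 0 < Nat.find (hex β hN) - 1 := by
          rcases Nat.eq_zero_or_pos (Nat.find (hex β hN) - 1) with h | h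
          · rw [h] at hre; exact absurd (reach_zero u hre) hPDγ
          · exact h
        have hNγ : ¬ IsNashEq u (gstar u hex hin β) := reach_pos_not_nash u hre hpos
        refine ih _ (Or.inr ⟨hNγ, ?_⟩)
        have := Nat.find_min' (hex _ hNγ) hre
        omega

end Aux2

/-- In a finite weakly acyclic game with a nonempty set `S̄` of payoff-dominant Nash
equilibria, if every non-Nash profile admits a best-reply improvement path into `S̄`
and every Nash equilibrium outside `S̄` is a better reply of some player to some
profile, then there is a one-step `S̄`-graph `g*` whose edges starting outside `A_NE`
are all better-reply edges; its non-better-reply edges are exactly those starting at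
profiles in `A_NE ∖ S̄`, and their number is `|A_NE ∖ S̄|`. -/
theorem stmt17 {I : Type*} [Fintype I] [DecidableEq I] {A : I → Type*}
    [∀ i, Fintype (A i)] [∀ i, Nonempty (A i)]
    (u : (i : I) → ((j : I) → A j) → ℝ)
    (hwa : ∀ α : (j : I) → A j, ∃ β, Relation.ReflTransGen
        (fun x y => ∃ i, BetterReply u i x y) α β ∧ IsNashEq u β)
    (hne : ∃ α, PayoffDominantEq u α)
    (hbest : ∀ α : (j : I) → A j, ¬ IsNashEq u α →
      ∃ β, PayoffDominantEq u β ∧ Relation.ReflTransGen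
        (fun x y => ∃ i, BestReply u i x y) α β)
    (hin : ∀ α : (j : I) → A j, IsNashEq u α → ¬ PayoffDominantEq u α →
      ∃ γ i, BetterReply u i γ α) :
    ∃ g : ((j : I) → A j) → ((j : I) → A j),
      (∀ β, ¬ PayoffDominantEq u β →
        (g β ≠ β ∧ OneStep β (g β) ∧ ∃ n : ℕ, PayoffDominantEq u (g^[n] β))) ∧
      (∀ β, ¬ IsNashEq u β → ∃ i, BetterReply u i β (g β)) ∧
      (Finset.univ.filter
          (fun β => ¬ PayoffDominantEq u β ∧ ¬ ∃ i, BetterReply u i β (g β)) =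
        Finset.univ.filter
          (fun β => IsNashEq u β ∧ ¬ PayoffDominantEq u β)) ∧
      (Finset.univ.filter
          (fun β => ¬ PayoffDominantEq u β ∧ ¬ ∃ i, BetterReply u i β (g β))).card =
        (Finset.univ.filter
          (fun β => IsNashEq u β ∧ ¬ PayoffDominantEq u β)).card := by
  have hex : ∀ β : (j : I) → A j, ¬ IsNashEq u β → ∃ n, ReachN u n β := by
    intro β hN
    obtain ⟨γ, hγPD, hrtg⟩ := hbest β hN
    exact reach_of_rtg u hrtg 0 ⟨fun _ => γ, rfl, hγPD, fun k hk => absurd hk (by omega)⟩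
  have key2 : ∀ β, ¬ IsNashEq u β → ∃ i, BetterReply u i β (gstar u hex hin β) := by
    intro β hN
    obtain ⟨⟨i, hi⟩, _⟩ := gstar_not_nash u hex hin hN
    exact ⟨i, hi.1⟩
  have key1 : ∀ β, ¬ PayoffDominantEq u β →
      (gstar u hex hin β ≠ β ∧ OneStep β (gstar u hex hin β) ∧
        ∃ n : ℕ, PayoffDominantEq u ((gstar u hex hin)^[n] β)) := by
    intro β hPD
    by_cases hN : IsNashEq u β
    · obtain ⟨i, hi⟩ := gstar_nash u hex hin hN hPD
      have hne' : gstar u hex hin β i ≠ β i := by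
        intro heq
        have heq2 : gstar u hex hin β = β := by
          funext j
          by_cases hj : j = i
          · rw [hj]; exact heq
          · exact (hi.1 j hj).symm
        rw [heq2] at hi
        exact lt_irrefl _ hi.2
      have hNγ : ¬ IsNashEq u (gstar u hex hin β) := fun h => h i β hi
      refine ⟨fun h => hne' (by rw [h]), ⟨i, hne', fun j hj => (hi.1 j hj).symm⟩,
        Nat.find (hex _ hNγ) + 1, ?_⟩
      rw [Function.iterate_succ_apply]
      exact gstar_iter u hex hin _ _ (Or.inr ⟨hNγ, le_refl _⟩)
    · obtain ⟨i, hi⟩ := key2 β hN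
      have hne' : gstar u hex hin β i ≠ β i := by
        intro heq
        have heq2 : gstar u hex hin β = β := by
          funext j
          by_cases hj : j = i
          · rw [hj]; exact heq
          · exact hi.1 j hj
        rw [heq2] at hi
        exact lt_irrefl _ hi.2
      refine ⟨fun h => hne' (by rw [h]), ⟨i, hne', hi.1⟩, Nat.find (hex β hN), ?_⟩
      exact gstar_iter u hex hin _ β (Or.inr ⟨hN, le_refl _⟩)
  have key3 : (Finset.univ.filter
          (fun β => ¬ PayoffDominantEq u β ∧
            ¬ ∃ i, BetterReply u i β (gstar u hex hin β)) =
        Finset.univ.filter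
          (fun β => IsNashEq u β ∧ ¬ PayoffDominantEq u β)) := by
    apply Finset.filter_congr
    intro β _
    constructor
    · rintro ⟨hPD, hno⟩
      refine ⟨?_, hPD⟩
      by_contra hN
      exact hno (key2 β hN)
    · rintro ⟨hN, hPD⟩
      exact ⟨hPD, fun ⟨i, hi⟩ => hN i (gstar u hex hin β) hi⟩
  exact ⟨gstar u hex hin, key1, key2, key3, by rw [key3]⟩
end

section
/- Let a > c > 0, d > b > 0 and a > d, and let p be a real-valued function differentiable on an open interval containing [min(b,c), a], with p'(v) < 0 for all v in that interval and with p' strictly increasing on that interval. Define the minimum resistances r_AA = min{p(a) + p(b) + p(d), 2·p(a) + p(b)}, r_AB = p(a) + p(b) + p(c), and r_BB = p(a) + p(c) + p(d). Then: (i) r_AA = 2·p(a) + p(b); (ii) r_AB > r_AA and r_AB > r_BB; (iii) if a − c < d − b then r_AA > r_BB (so (B,B) has the strictly smallest minimum resistance); (iv) if a − c ≥ d − b and c ≤ b then r_AA ≤ r_BB. -/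
/-- Comparison of the minimum resistances of the pure strategy states in the 2×2
coordination game (`a > c > 0`, `d > b > 0`, `a > d`), where `p` is the one-step
transition resistance as a function of the destination payoff: a positive role is
played by `p` being strictly decreasing with strictly increasing derivative on an
open interval containing `[min b c, a]`. With
`r_AA = min(p a + p b + p d, 2·p a + p b)`, `r_AB = p a + p b + p c`,
`r_BB = p a + p c + p d`: (i) `r_AA = 2·p a + p b`; (ii) `r_AB > r_AA` and
`r_AB > r_BB`; (iii) if `a − c < d − b` then `r_BB < r_AA`; (iv) if `a − c ≥ d − b`
and `c ≤ b` then `r_AA ≤ r_BB`. -/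
theorem stmt19 (a b c d : ℝ)
    (hac : a > c) (hc : c > 0) (hdb : d > b) (hb : b > 0) (had : a > d)
    (p p' : ℝ → ℝ) (l r : ℝ)
    (hsub : Set.Icc (min b c) a ⊆ Set.Ioo l r)
    (hderiv : ∀ x ∈ Set.Ioo l r, HasDerivAt p (p' x) x)
    (hneg : ∀ x ∈ Set.Ioo l r, p' x < 0)
    (hmono : StrictMonoOn p' (Set.Ioo l r)) :
    (min (p a + p b + p d) (2 * p a + p b) = 2 * p a + p b) ∧
    (p a + p b + p c > min (p a + p b + p d) (2 * p a + p b)) ∧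
    (p a + p b + p c > p a + p c + p d) ∧
    (a - c < d - b →
      p a + p c + p d < min (p a + p b + p d) (2 * p a + p b)) ∧
    (a - c ≥ d - b → c ≤ b →
      min (p a + p b + p d) (2 * p a + p b) ≤ p a + p c + p d) := by
  have hmem : ∀ x : ℝ, min b c ≤ x → x ≤ a → x ∈ Set.Ioo l r :=
    fun x h1 h2 => hsub ⟨h1, h2⟩
  have hbmem : b ∈ Set.Ioo l r := hmem b (min_le_left _ _) (by linarith)
  have hcmem : c ∈ Set.Ioo l r := hmem c (min_le_right _ _) (by linarith)
  have hdmem : d ∈ Set.Ioo l r := hmem d ((min_le_left _ _).trans hdb.le) (by linarith)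
  have hamem : a ∈ Set.Ioo l r := hmem a ((min_le_left _ _).trans (by linarith)) le_rfl
  have hcont : ContinuousOn p (Set.Ioo l r) :=
    fun x hx => (hderiv x hx).continuousAt.continuousWithinAt
  have hanti : StrictAntiOn p (Set.Ioo l r) := by
    apply strictAntiOn_of_deriv_neg (convex_Ioo l r) hcont
    intro x hx
    rw [interior_Ioo] at hx
    rw [(hderiv x hx).deriv]
    exact hneg x hx
  have hpad : p a < p d := hanti hdmem hamem had
  have hpac : p a < p c := hanti hcmem hamem hac
  have hpbd : p d < p b := hanti hbmem hdmem hdb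
  have h1 : min (p a + p b + p d) (2 * p a + p b) = 2 * p a + p b :=
    min_eq_right (by linarith)
  refine ⟨h1, ?_, by linarith, ?_, ?_⟩
  · rw [h1]; linarith
  · intro h
    rw [h1]
    -- convexity
    have hconv : ConvexOn ℝ (Set.Ioo l r) p := by
      have hmono' : MonotoneOn (deriv p) (interior (Set.Ioo l r)) := by
        rw [interior_Ioo]
        intro x hx y hy hxy
        rw [(hderiv x hx).deriv, (hderiv y hy).deriv]
        rcases eq_or_lt_of_le hxy with rfl | hlt
        · exact le_rfl
        · exact (hmono hx hy hlt).le
      exact hmono'.convexOn_of_deriv (convex_Ioo l r) hcont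
        (fun x hx => by rw [interior_Ioo] at hx; exact (hderiv x hx).differentiableAt.differentiableWithinAt)
    have hbc : b < c := by linarith
    set d' := a + b - c with hd'
    have hd'mem : d' ∈ Set.Ioo l r :=
      hmem d' ((min_le_left _ _).trans (by simp [hd']; linarith)) (by simp [hd']; linarith)
    have hpd : p d < p d' := hanti hd'mem hdmem (by simp [hd']; linarith)
    set t := (a - c) / (a - b) with ht
    have hab : (0:ℝ) < a - b := by linarith
    have ht0 : 0 < t := div_pos (by linarith) hab
    have ht1 : t < 1 := (div_lt_one hab).mpr (by linarith)
    have htab : t * (a - b) = a - c := div_mul_cancel₀ _ (ne_of_gt hab)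
    have hcomb1 : p c ≤ t * p b + (1 - t) * p a := by
      have := hconv.2 hbmem hamem ht0.le (by linarith : (0:ℝ) ≤ 1 - t) (by ring)
      simpa [smul_eq_mul, show t * b + (1 - t) * a = c by nlinarith] using this
    have hcomb2 : p d' ≤ (1 - t) * p b + t * p a := by
      have := hconv.2 hbmem hamem (by linarith : (0:ℝ) ≤ 1 - t) ht0.le (by ring)
      simpa [smul_eq_mul, show (1 - t) * b + t * a = d' by nlinarith] using this
    linarith
  · intro h hcb
    rw [h1]
    rcases eq_or_lt_of_le hcb with rfl | hlt
    · linarith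
    · have : p b < p c := hanti hcmem hbmem hlt
      linarith
end
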